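/- arXiv:2511.10576 — 7 statements merged into one kernel-verified Lean document; each statement's English description precedes it below -/
import Mathlib

section
/- The convex hull of the $\ell_0$-ball $\mathcal{B}_0^t(\bar{x})$ equals the intersection $\mathcal{D} \cap \widetilde{\mathcal{B}}_1^t(\bar{x})$ of the box $\mathcal{D}$ with the asymmetrically scaled $\ell_1$-ball. -/
open scoped ENNReal

noncomputable def deltaE {k : ℕ} (a b x : Fin k → ℝ) (i : Fin k) (y : Fin k → ℝ) : ℝ≥0∞ :=
  if y i = x i then 0
  else if x i < y i then (if b i = x i then ⊤ else ENNReal.ofReal ((y i - x i) / (b i - x i)))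
  else (if a i = x i then ⊤ else ENNReal.ofReal ((y i - x i) / (a i - x i)))


noncomputable def Tv (p q r c : ℝ) : ℝ := max (c - r) 0 / (q - r) + max (r - c) 0 / (r - p)

lemma Tv_nonneg {p q r : ℝ} (hpr : p ≤ r) (hrq : r ≤ q) (c : ℝ) : 0 ≤ Tv p q r c :=
  add_nonneg (div_nonneg (le_max_right _ _) (by linarith))
    (div_nonneg (le_max_right _ _) (by linarith))

lemma Tv_self (p q r : ℝ) : Tv p q r r = 0 := by simp [Tv]

lemma Tv_param_right {p q r v : ℝ} (hq : r < q) (hv0 : 0 ≤ v) :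
    Tv p q r (r + v * (q - r)) = v := by
  have h1 : max (r + v * (q - r) - r) 0 = v * (q - r) := by
    rw [show r + v * (q - r) - r = v * (q - r) by ring]
    exact max_eq_left (by nlinarith)
  have h2 : max (r - (r + v * (q - r))) 0 = 0 := max_eq_right (by nlinarith)
  rw [Tv, h1, h2, mul_div_assoc, div_self (by linarith : q - r ≠ 0), mul_one]
  simp

lemma Tv_param_left {p q r v : ℝ} (hp : p < r) (hv0 : 0 ≤ v) :
    Tv p q r (r + v * (p - r)) = v := by
  have h1 : max (r + v * (p - r) - r) 0 = 0 := max_eq_right (by nlinarith)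
  have h2 : max (r - (r + v * (p - r))) 0 = v * (r - p) := by
    rw [show r - (r + v * (p - r)) = v * (r - p) by ring]
    exact max_eq_left (by nlinarith)
  rw [Tv, h1, h2, mul_div_assoc, div_self (by linarith : r - p ≠ 0), mul_one]
  simp

lemma Tv_endpoint {p q r c : ℝ} (hpr : p ≤ r) (hrq : r ≤ q) (h : c = p ∨ c = q)
    (hne : c ≠ r) : Tv p q r c = 1 := by
  rcases h with h | h
  · have hp : p < r := lt_of_le_of_ne hpr (by rw [← h]; exact hne)
    have : c = r + 1 * (p - r) := by rw [h]; ring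
    rw [this, Tv_param_left hp zero_le_one]
  · have hq : r < q := lt_of_le_of_ne hrq (by rw [← h]; exact fun e => hne e.symm)
    have : c = r + 1 * (q - r) := by rw [h]; ring
    rw [this, Tv_param_right hq zero_le_one]

lemma Tv_le_one {p q r c : ℝ} (hpr : p ≤ r) (hrq : r ≤ q) (hc : p ≤ c) (hcq : c ≤ q) :
    Tv p q r c ≤ 1 := by
  rcases le_total c r with h | h
  · have h1 : max (c - r) 0 = 0 := max_eq_right (by linarith)
    rw [Tv, h1]
    rcases eq_or_lt_of_le hpr with he | hl
    · have : c = r := le_antisymm h (he ▸ hc)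
      simp [this]
    · have : max (r - c) 0 = r - c := max_eq_left (by linarith)
      rw [this]
      have := div_le_one_of_le₀ (show r - c ≤ r - p by linarith) (by linarith)
      simp only [zero_div]
      linarith
  · have h2 : max (r - c) 0 = 0 := max_eq_right (by linarith)
    rw [Tv, h2]
    rcases eq_or_lt_of_le hrq with he | hl
    · have : c = r := le_antisymm (he ▸ hcq) h
      simp [this]
    · have h1 : max (c - r) 0 = c - r := max_eq_left (by linarith)
      rw [h1]
      have := div_le_one_of_le₀ (show c - r ≤ q - r by linarith) (by linarith)
      simp only [zero_div]
      linarith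

lemma Tv_combo {p q r c d θ σ : ℝ} (hpr : p ≤ r) (hrq : r ≤ q)
    (hθ : 0 ≤ θ) (hσ : 0 ≤ σ) (hθσ : θ + σ = 1) :
    Tv p q r (θ * c + σ * d) ≤ θ * Tv p q r c + σ * Tv p q r d := by
  have hM1 : max (θ * c + σ * d - r) 0 ≤ θ * max (c - r) 0 + σ * max (d - r) 0 := by
    apply max_le
    · have h1 := mul_le_mul_of_nonneg_left (le_max_left (c - r) 0) hθ
      have h2 := mul_le_mul_of_nonneg_left (le_max_left (d - r) 0) hσ
      have hex : θ * c + σ * d - r = θ * (c - r) + σ * (d - r) := by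
        linear_combination r * hθσ
      linarith
    · positivity
  have hM2 : max (r - (θ * c + σ * d)) 0 ≤ θ * max (r - c) 0 + σ * max (r - d) 0 := by
    apply max_le
    · have h1 := mul_le_mul_of_nonneg_left (le_max_left (r - c) 0) hθ
      have h2 := mul_le_mul_of_nonneg_left (le_max_left (r - d) 0) hσ
      have hex : r - (θ * c + σ * d) = θ * (r - c) + σ * (r - d) := by
        linear_combination (-r) * hθσ
      linarith
    · positivity
  have he : (0:ℝ) ≤ (q - r)⁻¹ := inv_nonneg.2 (by linarith)
  have hf : (0:ℝ) ≤ (r - p)⁻¹ := inv_nonneg.2 (by linarith)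
  simp only [Tv, div_eq_mul_inv]
  nlinarith [mul_le_mul_of_nonneg_right hM1 he, mul_le_mul_of_nonneg_right hM2 hf]

lemma frac_struct {p q r c : ℝ} (hpr : p ≤ r) (hrq : r ≤ q) (hcp : p ≤ c) (hcq : c ≤ q)
    (h1 : c ≠ r) (h2 : c ≠ p) (h3 : c ≠ q) :
    ∃ e u : ℝ, (e = p ∨ e = q) ∧ e ≠ r ∧ 0 < u ∧ u < 1 ∧ c = r + u * (e - r) ∧
      (∀ v, 0 ≤ v → v ≤ 1 → Tv p q r (r + v * (e - r)) = v ∧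
        (r + v * (e - r)) ∈ Set.Icc p q) := by
  rcases lt_or_gt_of_ne h1 with h | h
  · -- c < r, e = p
    have hp : p < c := lt_of_le_of_ne hcp (Ne.symm h2)
    have hpr' : p < r := lt_trans hp h
    have heq : c = r + (r - c) / (r - p) * (p - r) := by
      have hc0 := div_mul_cancel₀ (r - c) (show r - p ≠ 0 by linarith)
      have h2' : (r - c) / (r - p) * (p - r) = c - r := by
        rw [show p - r = -(r - p) by ring, mul_neg, hc0]
        ring
      linarith
    refine ⟨p, (r - c) / (r - p), Or.inl rfl, ne_of_lt hpr',
      div_pos (by linarith) (by linarith),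
      (div_lt_one (by linarith)).2 (by linarith), heq, fun v hv0 hv1 => ?_⟩
    refine ⟨Tv_param_left hpr' hv0, ?_, ?_⟩ <;> nlinarith
  · -- r < c, e = q
    have hq : c < q := lt_of_le_of_ne hcq h3
    have hrq' : r < q := lt_trans h hq
    have heq : c = r + (c - r) / (q - r) * (q - r) := by
      have h2' : (c - r) / (q - r) * (q - r) = c - r :=
        div_mul_cancel₀ (c - r) (show q - r ≠ 0 by linarith)
      linarith
    refine ⟨q, (c - r) / (q - r), Or.inr rfl, (ne_of_lt hrq').symm,
      div_pos (by linarith) (by linarith),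
      (div_lt_one (by linarith)).2 (by linarith), heq, fun v hv0 hv1 => ?_⟩
    refine ⟨Tv_param_right hrq' hv0, ?_, ?_⟩ <;> nlinarith

lemma deltaE_eq {k : ℕ} (a b x : Fin k → ℝ) (i : Fin k) (y : Fin k → ℝ)
    (hax : a i ≤ x i) (hy : y i ∈ Set.Icc (a i) (b i)) :
    deltaE a b x i y = ENNReal.ofReal (Tv (a i) (b i) (x i) (y i)) := by
  rcases lt_trichotomy (y i) (x i) with h | h | h
  · have ha : a i < x i := lt_of_le_of_lt hy.1 h
    rw [deltaE, if_neg (ne_of_lt h), if_neg (not_lt.2 (le_of_lt h)), if_neg (ne_of_lt ha)]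
    have h1 : max (y i - x i) 0 = 0 := max_eq_right (by linarith)
    have h2 : max (x i - y i) 0 = x i - y i := max_eq_left (by linarith)
    rw [Tv, h1, h2, zero_div, zero_add]
    congr 1
    rw [show x i - y i = -(y i - x i) by ring, show x i - a i = -(a i - x i) by ring,
      neg_div_neg_eq]
  · rw [deltaE, if_pos h, h, Tv_self]
    simp
  · have hb : x i < b i := lt_of_lt_of_le h hy.2
    rw [deltaE, if_neg (ne_of_gt h), if_pos h, if_neg (ne_of_gt hb)]
    have h1 : max (y i - x i) 0 = y i - x i := max_eq_left (by linarith)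
    have h2 : max (x i - y i) 0 = 0 := max_eq_right (by linarith)
    rw [Tv, h1, h2, zero_div, add_zero]

lemma sum_deltaE_eq {k : ℕ} (a b x : Fin k → ℝ) (y : Fin k → ℝ)
    (hx : ∀ i, a i ≤ x i ∧ x i ≤ b i) (hy : ∀ i, y i ∈ Set.Icc (a i) (b i)) :
    ∑ i, deltaE a b x i y = ENNReal.ofReal (∑ i, Tv (a i) (b i) (x i) (y i)) := by
  rw [ENNReal.ofReal_sum_of_nonneg (fun i _ => Tv_nonneg (hx i).1 (hx i).2 (y i))]
  exact Finset.sum_congr rfl fun i _ => deltaE_eq a b x i y (hx i).1 (hy i)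

lemma cond_iff {k : ℕ} (t : ℕ) (a b x : Fin k → ℝ) (y : Fin k → ℝ)
    (hx : ∀ i, a i ≤ x i ∧ x i ≤ b i) (hy : ∀ i, y i ∈ Set.Icc (a i) (b i)) :
    (∑ i, deltaE a b x i y ≤ (t : ℝ≥0∞)) ↔ (∑ i, Tv (a i) (b i) (x i) (y i) ≤ (t : ℝ)) := by
  rw [sum_deltaE_eq a b x y hx hy, show ((t : ℝ≥0∞)) = ENNReal.ofReal (t : ℝ) by simp,
    ENNReal.ofReal_le_ofReal_iff (Nat.cast_nonneg t)]

lemma key0 {k : ℕ} (t : ℕ) (a b x : Fin k → ℝ) (hx : ∀ i, a i ≤ x i ∧ x i ≤ b i)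
    (y : Fin k → ℝ)
    (hF : Finset.univ.filter (fun i => y i ≠ x i ∧ y i ≠ a i ∧ y i ≠ b i) = ∅)
    (hyD : ∀ i, y i ∈ Set.Icc (a i) (b i))
    (hsum : (∑ i, Tv (a i) (b i) (x i) (y i)) ≤ (t : ℝ)) :
    y ∈ {z : Fin k → ℝ | (∀ i, z i ∈ Set.Icc (a i) (b i)) ∧
        (Finset.univ.filter (fun i => z i ≠ x i)).card ≤ t} := by
  refine ⟨hyD, ?_⟩
  set N := Finset.univ.filter (fun i => y i ≠ x i) with hN
  have hone : ∀ i ∈ N, Tv (a i) (b i) (x i) (y i) = 1 := by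
    intro i hi
    have hi' : y i ≠ x i := (Finset.mem_filter.1 hi).2
    have hnotF : i ∉ Finset.univ.filter
        (fun i => y i ≠ x i ∧ y i ≠ a i ∧ y i ≠ b i) := by rw [hF]; exact Finset.notMem_empty i
    simp only [Finset.mem_filter, Finset.mem_univ, true_and, not_and, not_not] at hnotF
    rcases Classical.em (y i = a i) with h | h
    · exact Tv_endpoint (hx i).1 (hx i).2 (Or.inl h) hi'
    · exact Tv_endpoint (hx i).1 (hx i).2 (Or.inr (hnotF hi' h)) hi'
  have hcast : (N.card : ℝ) ≤ (t : ℝ) := by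
    calc (N.card : ℝ) = ∑ i ∈ N, Tv (a i) (b i) (x i) (y i) := by
          rw [Finset.sum_congr rfl hone]; simp
      _ ≤ ∑ i, Tv (a i) (b i) (x i) (y i) :=
          Finset.sum_le_sum_of_subset_of_nonneg (Finset.subset_univ N)
            (fun i _ _ => Tv_nonneg (hx i).1 (hx i).2 (y i))
      _ ≤ (t : ℝ) := hsum
  exact_mod_cast hcast

lemma key1 {k : ℕ} (t : ℕ) (a b x : Fin k → ℝ) (hx : ∀ i, a i ≤ x i ∧ x i ≤ b i)
    (y : Fin k → ℝ) (i : Fin k)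
    (hF : Finset.univ.filter (fun l => y l ≠ x l ∧ y l ≠ a l ∧ y l ≠ b l) = {i})
    (hyD : ∀ i, y i ∈ Set.Icc (a i) (b i))
    (hsum : (∑ i, Tv (a i) (b i) (x i) (y i)) ≤ (t : ℝ)) :
    y ∈ convexHull ℝ {z : Fin k → ℝ | (∀ i, z i ∈ Set.Icc (a i) (b i)) ∧
        (Finset.univ.filter (fun i => z i ≠ x i)).card ≤ t} := by
  have hiF : y i ≠ x i ∧ y i ≠ a i ∧ y i ≠ b i := by
    have : i ∈ Finset.univ.filter (fun l => y l ≠ x l ∧ y l ≠ a l ∧ y l ≠ b l) := by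
      rw [hF]; exact Finset.mem_singleton_self i
    exact (Finset.mem_filter.1 this).2
  obtain ⟨e, u, he, her, hu0, hu1, hyi, hP⟩ :=
    frac_struct (hx i).1 (hx i).2 (hyD i).1 (hyD i).2 hiF.1 hiF.2.1 hiF.2.2
  have hTvyi : Tv (a i) (b i) (x i) (y i) = u := by
    rw [hyi]; exact (hP u hu0.le hu1.le).1
  set N := Finset.univ.filter (fun l => y l ≠ x l) with hN
  have hiN : i ∈ N := Finset.mem_filter.2 ⟨Finset.mem_univ i, hiF.1⟩
  -- all other nonequal coordinates have Tv = 1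
  have hone : ∀ l ∈ N.erase i, Tv (a l) (b l) (x l) (y l) = 1 := by
    intro l hl
    obtain ⟨hli, hlN⟩ := Finset.mem_erase.1 hl
    have hl' : y l ≠ x l := (Finset.mem_filter.1 hlN).2
    have hnotF : l ∉ Finset.univ.filter
        (fun l => y l ≠ x l ∧ y l ≠ a l ∧ y l ≠ b l) := by
      rw [hF]; simp [hli]
    simp only [Finset.mem_filter, Finset.mem_univ, true_and, not_and, not_not] at hnotF
    rcases Classical.em (y l = a l) with h | h
    · exact Tv_endpoint (hx l).1 (hx l).2 (Or.inl h) hl'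
    · exact Tv_endpoint (hx l).1 (hx l).2 (Or.inr (hnotF hl' h)) hl'
  have hzero : ∀ l ∈ (Finset.univ.erase i) \ (N.erase i), Tv (a l) (b l) (x l) (y l) = 0 := by
    intro l hl
    obtain ⟨hl1, hl2⟩ := Finset.mem_sdiff.1 hl
    have hli := (Finset.mem_erase.1 hl1).1
    have : y l = x l := by
      by_contra hne
      exact hl2 (Finset.mem_erase.2 ⟨hli, Finset.mem_filter.2 ⟨Finset.mem_univ l, hne⟩⟩)
    rw [this, Tv_self]
  have hNsub : N.erase i ⊆ Finset.univ.erase i :=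
    fun l hl => Finset.mem_erase.2 ⟨(Finset.mem_erase.1 hl).1, Finset.mem_univ l⟩
  have hsum2 : ∑ l ∈ Finset.univ.erase i, Tv (a l) (b l) (x l) (y l)
      = ((N.erase i).card : ℝ) := by
    rw [← Finset.sum_subset hNsub (fun l hl hln => hzero l (Finset.mem_sdiff.2 ⟨hl, hln⟩)),
      Finset.sum_congr rfl hone]
    simp
  have hsplit : ∑ l ∈ Finset.univ.erase i, Tv (a l) (b l) (x l) (y l)
      + Tv (a i) (b i) (x i) (y i) = ∑ l, Tv (a l) (b l) (x l) (y l) :=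
    Finset.sum_erase_add _ _ (Finset.mem_univ i)
  have hKt : ((N.erase i).card : ℝ) + u ≤ (t : ℝ) := by
    rw [← hsum2, ← hTvyi]; linarith [hsplit, hsum]
  have hKlt : (N.erase i).card < t := by
    have : ((N.erase i).card : ℝ) < (t : ℝ) := by linarith
    exact_mod_cast this
  -- the two endpoints
  set y0 := Function.update y i (x i) with hy0
  set y1 := Function.update y i e with hy1
  have hy0mem : y0 ∈ {z : Fin k → ℝ | (∀ i, z i ∈ Set.Icc (a i) (b i)) ∧
      (Finset.univ.filter (fun i => z i ≠ x i)).card ≤ t} := by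
    constructor
    · intro l
      rcases eq_or_ne l i with rfl | hl
      · rw [hy0, Function.update_self]; exact ⟨(hx l).1, (hx l).2⟩
      · rw [hy0, Function.update_of_ne hl]; exact hyD l
    · have hsub : Finset.univ.filter (fun l => y0 l ≠ x l) ⊆ N.erase i := by
        intro l hl
        have hl' : y0 l ≠ x l := (Finset.mem_filter.1 hl).2
        rcases eq_or_ne l i with rfl | hli
        · exact absurd (by rw [hy0, Function.update_self]) hl'
        · rw [hy0, Function.update_of_ne hli] at hl'
          exact Finset.mem_erase.2 ⟨hli, Finset.mem_filter.2 ⟨Finset.mem_univ l, hl'⟩⟩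
      exact le_trans (Finset.card_le_card hsub) hKlt.le
  have hy1mem : y1 ∈ {z : Fin k → ℝ | (∀ i, z i ∈ Set.Icc (a i) (b i)) ∧
      (Finset.univ.filter (fun i => z i ≠ x i)).card ≤ t} := by
    constructor
    · intro l
      rcases eq_or_ne l i with rfl | hl
      · rw [hy1, Function.update_self]
        rcases he with h | h <;> rw [h]
        · exact ⟨le_refl _, le_trans (hx l).1 (hx l).2⟩
        · exact ⟨le_trans (hx l).1 (hx l).2, le_refl _⟩
      · rw [hy1, Function.update_of_ne hl]; exact hyD l
    · have hsub : Finset.univ.filter (fun l => y1 l ≠ x l) ⊆ insert i (N.erase i) := by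
        intro l hl
        have hl' : y1 l ≠ x l := (Finset.mem_filter.1 hl).2
        rcases eq_or_ne l i with rfl | hli
        · exact Finset.mem_insert_self _ _
        · rw [hy1, Function.update_of_ne hli] at hl'
          exact Finset.mem_insert_of_mem
            (Finset.mem_erase.2 ⟨hli, Finset.mem_filter.2 ⟨Finset.mem_univ l, hl'⟩⟩)
      calc (Finset.univ.filter (fun l => y1 l ≠ x l)).card
          ≤ (insert i (N.erase i)).card := Finset.card_le_card hsub
        _ ≤ (N.erase i).card + 1 := Finset.card_insert_le _ _
        _ ≤ t := hKlt
  have hcomb : y = (1 - u) • y0 + u • y1 := by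
    funext l
    simp only [Pi.add_apply, Pi.smul_apply, smul_eq_mul]
    rcases eq_or_ne l i with rfl | hl
    · rw [hy0, hy1, Function.update_self, Function.update_self, hyi]; ring
    · rw [hy0, hy1, Function.update_of_ne hl, Function.update_of_ne hl]; ring
  rw [hcomb]
  exact convex_convexHull ℝ _ (subset_convexHull ℝ _ hy0mem) (subset_convexHull ℝ _ hy1mem)
    (by linarith) hu0.le (by ring)

lemma key {k : ℕ} (t : ℕ) (a b x : Fin k → ℝ) (hx : ∀ i, a i ≤ x i ∧ x i ≤ b i) :
    ∀ m : ℕ, ∀ y : Fin k → ℝ,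
      (Finset.univ.filter (fun l => y l ≠ x l ∧ y l ≠ a l ∧ y l ≠ b l)).card ≤ m →
      (∀ i, y i ∈ Set.Icc (a i) (b i)) →
      (∑ i, Tv (a i) (b i) (x i) (y i)) ≤ (t : ℝ) →
      y ∈ convexHull ℝ {z : Fin k → ℝ | (∀ i, z i ∈ Set.Icc (a i) (b i)) ∧
        (Finset.univ.filter (fun i => z i ≠ x i)).card ≤ t} := by
  intro m
  induction m with
  | zero =>
    intro y hcard hyD hsum
    exact subset_convexHull ℝ _
      (key0 t a b x hx y (Finset.card_eq_zero.1 (Nat.le_zero.1 hcard)) hyD hsum)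
  | succ m ih =>
    intro y hcard hyD hsum
    set F := Finset.univ.filter (fun l => y l ≠ x l ∧ y l ≠ a l ∧ y l ≠ b l) with hFdef
    rcases Nat.lt_or_ge F.card 2 with hlt | hge
    · rcases (by omega : F.card = 0 ∨ F.card = 1) with h0 | h1
      · exact subset_convexHull ℝ _ (key0 t a b x hx y (Finset.card_eq_zero.1 h0) hyD hsum)
      · obtain ⟨i, hi⟩ := Finset.card_eq_one.1 h1
        exact key1 t a b x hx y i hi hyD hsum
    · obtain ⟨i, hiF, j, hjF, hij⟩ := Finset.one_lt_card.1 hge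
      have hiF' := (Finset.mem_filter.1 hiF).2
      have hjF' := (Finset.mem_filter.1 hjF).2
      obtain ⟨ei, α, hei, heir, hα0, hα1, hyiEq, hPi⟩ :=
        frac_struct (hx i).1 (hx i).2 (hyD i).1 (hyD i).2 hiF'.1 hiF'.2.1 hiF'.2.2
      obtain ⟨ej, β, hej, hejr, hβ0, hβ1, hyjEq, hPj⟩ :=
        frac_struct (hx j).1 (hx j).2 (hyD j).1 (hyD j).2 hjF'.1 hjF'.2.1 hjF'.2.2
      set sp := min (1 - α) β with hsp
      set sm := min α (1 - β) with hsm
      have hsp0 : 0 < sp := lt_min (by linarith) hβ0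
      have hsm0 : 0 < sm := lt_min hα0 (by linarith)
      have hsp1 : sp ≤ 1 - α := min_le_left _ _
      have hsp2 : sp ≤ β := min_le_right _ _
      have hsm1 : sm ≤ α := min_le_left _ _
      have hsm2 : sm ≤ 1 - β := min_le_right _ _
      set P : ℝ → ℝ → (Fin k → ℝ) := fun u v =>
        Function.update (Function.update y i (x i + u * (ei - x i))) j
          (x j + v * (ej - x j)) with hPdef
      have hPi' : ∀ u v, P u v i = x i + u * (ei - x i) := by
        intro u v
        rw [hPdef]
        simp only
        rw [Function.update_of_ne hij, Function.update_self]
      have hPj' : ∀ u v, P u v j = x j + v * (ej - x j) := by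
        intro u v
        rw [hPdef]
        simp only
        rw [Function.update_self]
      have hPl : ∀ u v l, l ≠ i → l ≠ j → P u v l = y l := by
        intro u v l hli hlj
        rw [hPdef]
        simp only
        rw [Function.update_of_ne hlj, Function.update_of_ne hli]
      have hPD : ∀ u v, 0 ≤ u → u ≤ 1 → 0 ≤ v → v ≤ 1 →
          ∀ l, P u v l ∈ Set.Icc (a l) (b l) := by
        intro u v hu0 hu1 hv0 hv1 l
        rcases eq_or_ne l i with rfl | hli
        · rw [hPi']; exact (hPi u hu0 hu1).2
        rcases eq_or_ne l j with rfl | hlj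
        · rw [hPj']; exact (hPj v hv0 hv1).2
        · rw [hPl u v l hli hlj]; exact hyD l
      have hjmem : j ∈ Finset.univ.erase i :=
        Finset.mem_erase.2 ⟨hij.symm, Finset.mem_univ j⟩
      have hsplit : ∀ z : Fin k → ℝ, ∑ l, Tv (a l) (b l) (x l) (z l) =
          ∑ l ∈ (Finset.univ.erase i).erase j, Tv (a l) (b l) (x l) (z l)
            + Tv (a j) (b j) (x j) (z j) + Tv (a i) (b i) (x i) (z i) := by
        intro z
        rw [Finset.sum_erase_add _ _ hjmem, Finset.sum_erase_add _ _ (Finset.mem_univ i)]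
      have hTsum : ∀ u v, 0 ≤ u → u ≤ 1 → 0 ≤ v → v ≤ 1 →
          ∑ l, Tv (a l) (b l) (x l) (P u v l) =
          ∑ l, Tv (a l) (b l) (x l) (y l) + u + v - α - β := by
        intro u v hu0 hu1 hv0 hv1
        have e1 : ∑ l ∈ (Finset.univ.erase i).erase j, Tv (a l) (b l) (x l) (P u v l)
            = ∑ l ∈ (Finset.univ.erase i).erase j, Tv (a l) (b l) (x l) (y l) :=
          Finset.sum_congr rfl fun l hl => by
            obtain ⟨hlj, hl'⟩ := Finset.mem_erase.1 hl
            obtain ⟨hli, -⟩ := Finset.mem_erase.1 hl'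
            rw [hPl u v l hli hlj]
        have e2 : Tv (a j) (b j) (x j) (P u v j) = v := by
          rw [hPj']; exact (hPj v hv0 hv1).1
        have e3 : Tv (a i) (b i) (x i) (P u v i) = u := by
          rw [hPi']; exact (hPi u hu0 hu1).1
        have e4 : Tv (a j) (b j) (x j) (y j) = β := by
          rw [hyjEq]; exact (hPj β hβ0.le hβ1.le).1
        have e5 : Tv (a i) (b i) (x i) (y i) = α := by
          rw [hyiEq]; exact (hPi α hα0.le hα1.le).1
        rw [hsplit (P u v), hsplit y, e1, e2, e3, e4, e5]
        ring
      have hFsub : ∀ u v, Finset.univ.filter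
          (fun l => P u v l ≠ x l ∧ P u v l ≠ a l ∧ P u v l ≠ b l) ⊆ F := by
        intro u v l hl
        have hl' := (Finset.mem_filter.1 hl).2
        rcases eq_or_ne l i with rfl | hli
        · exact hiF
        rcases eq_or_ne l j with rfl | hlj
        · exact hjF
        · rw [hPl u v l hli hlj] at hl'
          exact Finset.mem_filter.2 ⟨Finset.mem_univ l, hl'⟩
      have hcard' : ∀ u v, ((u = 0 ∨ u = 1) ∨ (v = 0 ∨ v = 1)) →
          (Finset.univ.filter
            (fun l => P u v l ≠ x l ∧ P u v l ≠ a l ∧ P u v l ≠ b l)).card ≤ m := by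
        intro u v hcase
        have hdrop : ∃ c ∈ F, c ∉ Finset.univ.filter
            (fun l => P u v l ≠ x l ∧ P u v l ≠ a l ∧ P u v l ≠ b l) := by
          rcases hcase with (h | h) | (h | h)
          · refine ⟨i, hiF, ?_⟩
            have hv : P u v i = x i := by rw [hPi', h]; ring
            simp [Finset.mem_filter, hv]
          · refine ⟨i, hiF, ?_⟩
            have hv : P u v i = ei := by rw [hPi', h]; ring
            rcases hei with he | he <;> simp [Finset.mem_filter, hv, he]
          · refine ⟨j, hjF, ?_⟩
            have hv : P u v j = x j := by rw [hPj', h]; ring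
            simp [Finset.mem_filter, hv]
          · refine ⟨j, hjF, ?_⟩
            have hv : P u v j = ej := by rw [hPj', h]; ring
            rcases hej with he | he <;> simp [Finset.mem_filter, hv, he]
        have hss := Finset.card_lt_card ((Finset.ssubset_iff_of_subset (hFsub u v)).2 hdrop)
        exact Nat.lt_succ_iff.1 (lt_of_lt_of_le hss hcard)
      have hup : (α + sp = 0 ∨ α + sp = 1) ∨ (β - sp = 0 ∨ β - sp = 1) := by
        rcases le_total (1 - α) β with h | h
        · exact Or.inl (Or.inr (by rw [hsp, min_eq_left h]; ring))
        · exact Or.inr (Or.inl (by rw [hsp, min_eq_right h]; ring))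
      have hum : (α - sm = 0 ∨ α - sm = 1) ∨ (β + sm = 0 ∨ β + sm = 1) := by
        rcases le_total α (1 - β) with h | h
        · exact Or.inl (Or.inl (by rw [hsm, min_eq_left h]; ring))
        · exact Or.inr (Or.inr (by rw [hsm, min_eq_right h]; ring))
      have hyPmem := ih (P (α + sp) (β - sp)) (hcard' _ _ hup)
        (hPD _ _ (by linarith) (by linarith) (by linarith) (by linarith))
        (by rw [hTsum _ _ (by linarith) (by linarith) (by linarith) (by linarith)]; linarith)
      have hyMmem := ih (P (α - sm) (β + sm)) (hcard' _ _ hum)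
        (hPD _ _ (by linarith) (by linarith) (by linarith) (by linarith))
        (by rw [hTsum _ _ (by linarith) (by linarith) (by linarith) (by linarith)]; linarith)
      set θ := sm / (sp + sm) with hθdef
      have hspsm : 0 < sp + sm := by linarith
      have hθ0 : 0 ≤ θ := le_of_lt (div_pos hsm0 hspsm)
      have hθ1 : θ ≤ 1 := by rw [hθdef, div_le_one hspsm]; linarith
      have hkeyθ : θ * sp = (1 - θ) * sm := by
        rw [hθdef]
        field_simp
        ring
      have hcomb : y = θ • (P (α + sp) (β - sp)) + (1 - θ) • (P (α - sm) (β + sm)) := by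
        funext l
        simp only [Pi.add_apply, Pi.smul_apply, smul_eq_mul]
        rcases eq_or_ne l i with rfl | hli
        · rw [hPi', hPi', hyiEq]; linear_combination (x l - ei) * hkeyθ
        rcases eq_or_ne l j with rfl | hlj
        · rw [hPj', hPj', hyjEq]; linear_combination (ej - x l) * hkeyθ
        · rw [hPl _ _ l hli hlj, hPl _ _ l hli hlj]; ring
      rw [hcomb]
      exact convex_convexHull ℝ _ hyPmem hyMmem hθ0 (by linarith) (by ring)

/-- The convex hull of the ℓ₀-ball equals the intersection of the box with the
asymmetrically scaled ℓ₁-ball. -/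
theorem convexHull_l0Ball {k : ℕ} (hk : 1 ≤ k) (t : ℕ) (ht : 1 ≤ t) (htk : t ≤ k)
    (a b x : Fin k → ℝ) (hab : ∀ i, a i ≤ b i) (hx : ∀ i, a i ≤ x i ∧ x i ≤ b i) :
    convexHull ℝ
        {y : Fin k → ℝ | (∀ i, y i ∈ Set.Icc (a i) (b i)) ∧
          (Finset.univ.filter (fun i => y i ≠ x i)).card ≤ t} =
      {y : Fin k → ℝ | ∀ i, y i ∈ Set.Icc (a i) (b i)} ∩
        {y : Fin k → ℝ | ∑ i, deltaE a b x i y ≤ (t : ℝ≥0∞)} := by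
  apply Set.Subset.antisymm
  · apply convexHull_min
    · rintro y ⟨hyD, hyc⟩
      refine ⟨hyD, ?_⟩
      rw [Set.mem_setOf_eq, cond_iff t a b x y hx hyD]
      calc ∑ i, Tv (a i) (b i) (x i) (y i)
          ≤ ∑ i, (if y i ≠ x i then (1:ℝ) else 0) := by
            apply Finset.sum_le_sum
            intro i _
            by_cases h : y i = x i
            · simp [h, Tv_self]
            · simp only [h, ne_eq, not_false_eq_true, if_true]
              exact Tv_le_one (hx i).1 (hx i).2 (hyD i).1 (hyD i).2
        _ = ((Finset.univ.filter (fun i => y i ≠ x i)).card : ℝ) := by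
            rw [Finset.sum_boole]
        _ ≤ (t : ℝ) := by exact_mod_cast hyc
    · rintro y ⟨hyD, hy1⟩ z ⟨hzD, hz1⟩ θ σ hθ hσ hθσ
      have hyD' : ∀ i, y i ∈ Set.Icc (a i) (b i) := hyD
      have hzD' : ∀ i, z i ∈ Set.Icc (a i) (b i) := hzD
      have hwD : ∀ i, (θ • y + σ • z) i ∈ Set.Icc (a i) (b i) := by
        intro i
        simp only [Pi.add_apply, Pi.smul_apply, smul_eq_mul]
        have ha : θ * a i + σ * a i = a i := by rw [← add_mul, hθσ, one_mul]
        have hb : θ * b i + σ * b i = b i := by rw [← add_mul, hθσ, one_mul]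
        constructor
        · have h1 := mul_le_mul_of_nonneg_left (hyD' i).1 hθ
          have h2 := mul_le_mul_of_nonneg_left (hzD' i).1 hσ
          linarith
        · have h1 := mul_le_mul_of_nonneg_left (hyD' i).2 hθ
          have h2 := mul_le_mul_of_nonneg_left (hzD' i).2 hσ
          linarith
      have hy1' : ∑ i, Tv (a i) (b i) (x i) (y i) ≤ (t : ℝ) :=
        (cond_iff t a b x y hx hyD').1 hy1
      have hz1' : ∑ i, Tv (a i) (b i) (x i) (z i) ≤ (t : ℝ) :=
        (cond_iff t a b x z hx hzD').1 hz1
      refine ⟨hwD, ?_⟩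
      rw [Set.mem_setOf_eq, cond_iff t a b x _ hx hwD]
      have hmix : θ * (t : ℝ) + σ * (t : ℝ) = (t : ℝ) := by
        rw [← add_mul, hθσ, one_mul]
      calc ∑ i, Tv (a i) (b i) (x i) ((θ • y + σ • z) i)
          ≤ ∑ i, (θ * Tv (a i) (b i) (x i) (y i) + σ * Tv (a i) (b i) (x i) (z i)) := by
            apply Finset.sum_le_sum
            intro i _
            simp only [Pi.add_apply, Pi.smul_apply, smul_eq_mul]
            exact Tv_combo (hx i).1 (hx i).2 hθ hσ hθσ
        _ = θ * ∑ i, Tv (a i) (b i) (x i) (y i) + σ * ∑ i, Tv (a i) (b i) (x i) (z i) := by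
            rw [Finset.sum_add_distrib, Finset.mul_sum, Finset.mul_sum]
        _ ≤ (t : ℝ) := by
            have h1 := mul_le_mul_of_nonneg_left hy1' hθ
            have h2 := mul_le_mul_of_nonneg_left hz1' hσ
            linarith
  · rintro y ⟨hyD, hy1⟩
    exact key t a b x hx _ y le_rfl hyD ((cond_iff t a b x y hx hyD).1 hy1)
end

section
/- For fixed integer $t \geq 1$, the ratio $\frac{k!/t^k - \sum_{r=0}^{t-1} c_{r,k,t}}{1 + \sum_{r=1}^{t-1} c_{r,k,t}}$, where $c_{r,k,t} = (-1)^r \binom{k}{r}(1-r/t)^k$, tends to $+\infty$ as $k \to \infty$; i.e., the relative excess volume of the bounding box $\mathcal{D}$ over the convex hull of the $\ell_0$-ball diverges. -/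
open Filter Topology

noncomputable def cCoeff (r k t : ℕ) : ℝ :=
  (-1 : ℝ) ^ r * (Nat.choose k r) * (1 - (r : ℝ) / (t : ℝ)) ^ k

lemma cCoeff_tendsto_zero {r t : ℕ} (hr : 1 ≤ r) (hrt : r < t) :
    Tendsto (fun k : ℕ => cCoeff r k t) atTop (𝓝 0) := by
  have ht0 : (0 : ℝ) < t := by exact_mod_cast lt_of_le_of_lt (Nat.zero_le r) hrt
  have hx0 : (0 : ℝ) ≤ 1 - (r : ℝ) / t := by
    rw [sub_nonneg, div_le_one ht0]
    exact_mod_cast hrt.le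
  have hx1 : 1 - (r : ℝ) / t < 1 := by
    have : (0 : ℝ) < (r : ℝ) / t := by
      apply div_pos _ ht0
      exact_mod_cast hr
    linarith
  apply squeeze_zero_norm (a := fun k : ℕ => (k : ℝ) ^ r * (1 - (r : ℝ) / t) ^ k)
  · intro k
    have h1 : ‖cCoeff r k t‖ = (Nat.choose k r : ℝ) * (1 - (r : ℝ) / t) ^ k := by
      simp [cCoeff, abs_mul, abs_pow, abs_of_nonneg hx0]
    rw [h1]
    apply mul_le_mul_of_nonneg_right _ (by positivity)
    exact_mod_cast Nat.choose_le_pow k r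
  · exact tendsto_pow_const_mul_const_pow_of_lt_one r hx0 hx1

/-- The relative excess volume of the bounding box over the convex hull diverges. -/
theorem excess_volume_box_tendsto_atTop (t : ℕ) (ht : 1 ≤ t) :
    Tendsto
      (fun k : ℕ =>
        ((Nat.factorial k : ℝ) / (t : ℝ) ^ k - ∑ r ∈ Finset.range t, cCoeff r k t) /
          (1 + ∑ r ∈ Finset.Icc 1 (t - 1), cCoeff r k t))
      atTop atTop := by
  have ht0 : (0 : ℝ) < t := by exact_mod_cast ht
  set D : ℕ → ℝ := fun k => 1 + ∑ r ∈ Finset.Icc 1 (t - 1), cCoeff r k t with hD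
  -- the range-t sum equals D
  have hsum : ∀ k, ∑ r ∈ Finset.range t, cCoeff r k t = D k := by
    intro k
    have hset : Finset.range t = insert 0 (Finset.Icc 1 (t - 1)) := by
      ext x
      simp only [Finset.mem_range, Finset.mem_insert, Finset.mem_Icc]
      omega
    rw [hset, Finset.sum_insert (by simp)]
    simp [cCoeff, hD]
  -- D tends to 1
  have hDlim : Tendsto D atTop (𝓝 1) := by
    have h0 : Tendsto (fun k : ℕ => ∑ r ∈ Finset.Icc 1 (t - 1), cCoeff r k t) atTop (𝓝 0) := by
      have := tendsto_finset_sum (Finset.Icc 1 (t - 1))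
        (f := fun (r : ℕ) (k : ℕ) => cCoeff r k t) (a := fun _ => (0 : ℝ))
        (fun r hr => by
          rw [Finset.mem_Icc] at hr
          exact cCoeff_tendsto_zero (t := t) hr.1 (by omega))
      simpa using this
    simpa using tendsto_const_nhds.add h0
  -- factorial over power tends to infinity
  have hfact : Tendsto (fun k : ℕ => (Nat.factorial k : ℝ) / (t : ℝ) ^ k) atTop atTop := by
    have h1 : Tendsto (fun k : ℕ => (t : ℝ) ^ k / (Nat.factorial k : ℝ)) atTop (𝓝[>] 0) := by
      rw [tendsto_nhdsWithin_iff]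
      refine ⟨FloorSemiring.tendsto_pow_div_factorial_atTop (t : ℝ), ?_⟩
      filter_upwards [] with k
      have : (0:ℝ) < Nat.factorial k := by exact_mod_cast Nat.factorial_pos k
      exact Set.mem_Ioi.mpr (by positivity)
    have := h1.inv_tendsto_nhdsGT_zero
    refine this.congr fun k => ?_
    have : (0:ℝ) < Nat.factorial k := by exact_mod_cast Nat.factorial_pos k
    simp [one_div, inv_div]
  -- main limit
  have hDinv : Tendsto (fun k : ℕ => (D k)⁻¹) atTop (𝓝 1) := by
    simpa using hDlim.inv₀ one_ne_zero
  have hmain : Tendsto (fun k : ℕ =>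
      ((Nat.factorial k : ℝ) / (t : ℝ) ^ k) * (D k)⁻¹ + (-1)) atTop atTop :=
    tendsto_atTop_add_const_right _ (-1) (hfact.atTop_mul_pos one_pos hDinv)
  have hne : ∀ᶠ k in atTop, D k ≠ 0 := by
    filter_upwards [hDlim.eventually_ne one_ne_zero] with k hk
    exact hk
  refine hmain.congr' ?_
  filter_upwards [hne] with k hk
  rw [hsum k]
  simp only [hD] at hk ⊢
  field_simp
  ring
end

section
/- The minimum of a linear function $y \mapsto \sum_{i=1}^k w_i y_i$ over the $\ell_0$-ball $\mathcal{B}_0^t(\bar{x})$ equals $\sum_{i=1}^k w_i \bar{x}_i$ plus the sum of the $t$ smallest values among $d_1^-, \dots, d_k^-$, where $d_i^- = \min(w_i(b_i - \bar{x}_i), w_i(a_i - \bar{x}_i))$. -/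
open Finset

lemma cardT (k t : ℕ) (htk : t ≤ k) :
    (Finset.univ.filter (fun i : Fin k => (i : ℕ) < t)).card = t := by
  apply Finset.card_eq_of_bijective (fun i h => ⟨i, lt_of_lt_of_le h htk⟩)
  · intro a ha
    simp only [mem_filter, mem_univ, true_and] at ha
    exact ⟨a, ha, rfl⟩
  · intro i h; simp [h]
  · intro i j hi hj hij
    simpa [Fin.ext_iff] using hij

lemma aux_sum {k t : ℕ} (htk : t ≤ k) (e : Fin k → ℝ) (he : ∀ i, e i ≤ 0)
    (hmono : ∀ i j : Fin k, i ≤ j → e i ≤ e j) (S : Finset (Fin k)) (hS : S.card ≤ t) :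
    ∑ j ∈ Finset.univ.filter (fun j : Fin k => (j : ℕ) < t), e j ≤ ∑ j ∈ S, e j := by
  set T := Finset.univ.filter (fun j : Fin k => (j : ℕ) < t) with hT
  have hTc : T.card = t := cardT k t htk
  have h1 : (S \ T).card ≤ (T \ S).card := by
    have e1 := Finset.card_sdiff_add_card_inter S T
    have e2 := Finset.card_sdiff_add_card_inter T S
    rw [Finset.inter_comm] at e2
    omega
  obtain ⟨U, hUsub, hUcard⟩ := Finset.exists_subset_card_eq h1
  have step1 : ∑ j ∈ T \ S, e j ≤ ∑ j ∈ U, e j := by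
    have := Finset.sum_le_sum_of_subset_of_nonneg (f := fun j => -e j) hUsub
      (fun i _ _ => neg_nonneg.2 (he i))
    simp only [Finset.sum_neg_distrib, neg_le_neg_iff] at this
    linarith [this]
  have g : (U : Finset (Fin k)) ≃ (S \ T : Finset (Fin k)) := Finset.equivOfCardEq hUcard
  have hg : ∀ u : U, e (u : Fin k) ≤ e ((g u : Fin k)) := by
    intro u
    apply hmono
    have hu : (u : Fin k) ∈ T \ S := hUsub u.2
    have hv : ((g u : Fin k)) ∈ S \ T := (g u).2
    simp only [hT, Finset.mem_sdiff, mem_filter, mem_univ, true_and] at hu hv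
    have : ((u : Fin k) : ℕ) < t := hu.1
    have h2 : ¬ (((g u : Fin k)) : ℕ) < t := hv.2
    exact Fin.le_def.2 (by omega)
  have step2 : ∑ j ∈ U, e j ≤ ∑ j ∈ S \ T, e j := by
    rw [← Finset.sum_coe_sort U, ← Finset.sum_coe_sort (S \ T)]
    rw [← Equiv.sum_comp g (fun v : (S \ T : Finset (Fin k)) => e (v : Fin k))]
    exact Finset.sum_le_sum fun u _ => hg u
  have d1 := Finset.sum_inter_add_sum_sdiff T S e
  have d2 := Finset.sum_inter_add_sum_sdiff S T e
  rw [Finset.inter_comm] at d2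
  linarith

/-- The minimum of a linear function over the ℓ₀-ball equals `∑ wᵢ xᵢ` plus the sum of
the `t` smallest values among the minimum entry contributions `dᵢ⁻`. -/
theorem isLeast_linear_l0Ball {k : ℕ} (hk : 1 ≤ k) (t : ℕ) (ht : 1 ≤ t) (htk : t ≤ k)
    (w a b x : Fin k → ℝ) (hab : ∀ i, a i ≤ b i) (hx : ∀ i, a i ≤ x i ∧ x i ≤ b i)
    (σ : Equiv.Perm (Fin k))
    (hσ : ∀ i j : Fin k, i ≤ j →
      min (w (σ i) * (b (σ i) - x (σ i))) (w (σ i) * (a (σ i) - x (σ i))) ≤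
        min (w (σ j) * (b (σ j) - x (σ j))) (w (σ j) * (a (σ j) - x (σ j)))) :
    IsLeast ((fun y : Fin k → ℝ => ∑ i, w i * y i) ''
        {y : Fin k → ℝ | (∀ i, y i ∈ Set.Icc (a i) (b i)) ∧
          (Finset.univ.filter (fun i => y i ≠ x i)).card ≤ t})
      (∑ i, w i * x i +
        ∑ i ∈ Finset.univ.filter (fun i : Fin k => (i : ℕ) < t),
          min (w (σ i) * (b (σ i) - x (σ i))) (w (σ i) * (a (σ i) - x (σ i)))) := by
  set d : Fin k → ℝ := fun i => min (w i * (b i - x i)) (w i * (a i - x i)) with hd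
  have hd0 : ∀ i, d i ≤ 0 := by
    intro i
    rcases le_total 0 (w i) with h | h
    · exact le_trans (min_le_right _ _) (mul_nonpos_of_nonneg_of_nonpos h (by linarith [(hx i).1]))
    · exact le_trans (min_le_left _ _) (mul_nonpos_of_nonpos_of_nonneg h (by linarith [(hx i).2]))
  have hdle : ∀ (i : Fin k) (v : ℝ), a i ≤ v → v ≤ b i → d i ≤ w i * (v - x i) := by
    intro i v h1 h2
    rcases le_total 0 (w i) with h | h
    · exact le_trans (min_le_right _ _) (mul_le_mul_of_nonneg_left (by linarith) h)
    · exact le_trans (min_le_left _ _) (mul_le_mul_of_nonpos_left (by linarith) h)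
  set T := Finset.univ.filter (fun i : Fin k => (i : ℕ) < t) with hTdef
  constructor
  · -- membership
    set y : Fin k → ℝ := fun i =>
      if ((σ.symm i : Fin k) : ℕ) < t then
        (if w i * (b i - x i) ≤ w i * (a i - x i) then b i else a i)
      else x i with hy
    refine ⟨y, ⟨?_, ?_⟩, ?_⟩
    · intro i
      simp only [hy]
      split_ifs with h1 h2
      · exact ⟨hab i, le_refl _⟩
      · exact ⟨le_refl _, hab i⟩
      · exact ⟨(hx i).1, (hx i).2⟩
    · -- card
      have hsub : Finset.univ.filter (fun i => y i ≠ x i) ⊆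
          Finset.univ.filter (fun i : Fin k => ((σ.symm i : Fin k) : ℕ) < t) := by
        intro i hi
        simp only [mem_filter, mem_univ, true_and] at hi ⊢
        by_contra h
        apply hi
        simp only [hy, if_neg h]
      have hcard : (Finset.univ.filter (fun i : Fin k => ((σ.symm i : Fin k) : ℕ) < t)).card = t := by
        have himg : Finset.univ.filter (fun i : Fin k => ((σ.symm i : Fin k) : ℕ) < t)
            = T.map σ.toEmbedding := by
          ext i
          simp only [hTdef, Finset.mem_map, mem_filter, mem_univ, true_and,
            Equiv.coe_toEmbedding]
          constructor
          · intro h; exact ⟨σ.symm i, h, σ.apply_symm_apply i⟩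
          · rintro ⟨j, hj, rfl⟩; simpa using hj
        rw [himg, Finset.card_map, hTdef, cardT k t htk]
      exact le_trans (Finset.card_le_card hsub) (le_of_eq hcard)
    · -- value
      have hterm : ∀ i : Fin k, w i * y i =
          w i * x i + (if ((σ.symm i : Fin k) : ℕ) < t then d i else 0) := by
        intro i
        simp only [hy, hd]
        split_ifs with h1 h2
        · rw [min_eq_left h2]; ring
        · rw [min_eq_right (le_of_not_ge h2)]; ring
        · ring
      have : ∑ i, w i * y i = ∑ i, w i * x i +
          ∑ i ∈ Finset.univ.filter (fun i : Fin k => ((σ.symm i : Fin k) : ℕ) < t), d i := by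
        simp only [hterm, Finset.sum_add_distrib]
        congr 1
        rw [Finset.sum_filter]
      show ∑ i, w i * y i = _
      rw [this]
      congr 1
      refine (Finset.sum_equiv σ ?_ ?_).symm
      · intro j
        simp [hTdef]
      · intro j _
        rfl
  · -- lower bound
    rintro v ⟨y, ⟨hyIcc, hycard⟩, rfl⟩
    set S := Finset.univ.filter (fun i => y i ≠ x i) with hS
    have key : ∑ i, w i * y i = ∑ i, w i * x i + ∑ i, w i * (y i - x i) := by
      rw [← Finset.sum_add_distrib]
      apply Finset.sum_congr rfl
      intro i _
      ring
    have h1 : ∑ i, w i * (y i - x i) = ∑ i ∈ S, w i * (y i - x i) := by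
      refine (Finset.sum_subset (Finset.subset_univ S) ?_).symm
      intro i _ hi
      simp only [hS, mem_filter, mem_univ, true_and, not_not] at hi
      rw [hi]; ring
    have h2 : ∑ i ∈ S, d i ≤ ∑ i ∈ S, w i * (y i - x i) :=
      Finset.sum_le_sum fun i _ => hdle i (y i) (hyIcc i).1 (hyIcc i).2
    have h3 : ∑ i ∈ S, d i = ∑ j ∈ S.image σ.symm, d (σ j) := by
      rw [Finset.sum_image (fun i _ j _ h => σ.symm.injective h)]
      simp
    have h4 : (S.image σ.symm).card ≤ t := by
      rw [Finset.card_image_of_injective _ σ.symm.injective]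
      exact hycard
    have h5 : ∑ j ∈ T, d (σ j) ≤ ∑ j ∈ S.image σ.symm, d (σ j) :=
      aux_sum htk (fun j => d (σ j)) (fun j => hd0 _) hσ _ h4
    have hTsum : ∑ i ∈ T, min (w (σ i) * (b (σ i) - x (σ i))) (w (σ i) * (a (σ i) - x (σ i)))
        = ∑ j ∈ T, d (σ j) := rfl
    show ∑ i, w i * x i + ∑ i ∈ T,
        min (w (σ i) * (b (σ i) - x (σ i))) (w (σ i) * (a (σ i) - x (σ i))) ≤ ∑ i, w i * y i
    rw [hTsum, key]
    linarith
end

section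
/- The maximum of a linear function $y \mapsto \sum_{i=1}^k w_i y_i$ over the $\ell_0$-ball $\mathcal{B}_0^t(\bar{x})$ equals $\sum_{i=1}^k w_i \bar{x}_i$ plus the sum of the $t$ largest values among $d_1^+, \dots, d_k^+$, where $d_i^+ = \max(w_i(b_i - \bar{x}_i), w_i(a_i - \bar{x}_i))$. -/
private lemma strictMono_nat_le {n : ℕ} (f : Fin n → ℕ) (hf : StrictMono f) :
    ∀ (i : ℕ) (h : i < n), i ≤ f ⟨i, h⟩ := by
  intro i
  induction i with
  | zero => intro h; exact Nat.zero_le _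
  | succ m ih =>
    intro h
    have hm : m < n := Nat.lt_of_succ_lt h
    have h1 : f ⟨m, hm⟩ < f ⟨m + 1, h⟩ := hf (by simp [Fin.lt_def])
    exact Nat.succ_le_of_lt (lt_of_le_of_lt (ih hm) h1)

private lemma filter_lt_eq_map {k n : ℕ} (hnk : n ≤ k) :
    Finset.univ.filter (fun j : Fin k => (j : ℕ) < n)
      = Finset.map (Fin.castLEEmb hnk) Finset.univ := by
  ext j
  simp only [Finset.mem_filter, Finset.mem_univ, true_and, Finset.mem_map,
    Fin.castLEEmb_apply]
  constructor
  · intro hj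
    exact ⟨⟨(j : ℕ), hj⟩, by ext; simp⟩
  · rintro ⟨m, -, rfl⟩
    exact m.2

private lemma topsum {k t : ℕ} (f : Fin k → ℝ) (hf0 : ∀ i, 0 ≤ f i)
    (hmono : ∀ i j : Fin k, i ≤ j → f j ≤ f i)
    (U : Finset (Fin k)) (hU : U.card ≤ t) :
    ∑ j ∈ U, f j ≤ ∑ j ∈ Finset.univ.filter (fun j : Fin k => (j : ℕ) < t), f j := by
  set n := U.card with hn
  set e := U.orderIsoOfFin hn.symm with he
  have hsm : StrictMono (fun m : Fin n => ((e m : Fin k) : ℕ)) := by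
    intro p q hpq
    exact Fin.lt_def.mp (e.strictMono hpq)
  have key : ∀ m : Fin n, (m : ℕ) ≤ ((e m : Fin k) : ℕ) := fun m =>
    strictMono_nat_le _ hsm m m.2
  have hnk : n ≤ k := hn ▸ le_trans (Finset.card_le_card (Finset.subset_univ U)) (by simp)
  have step1 : ∑ j ∈ U, f j = ∑ m : Fin n, f (e m) := by
    rw [← Finset.sum_attach U f]
    exact (Fintype.sum_equiv e.toEquiv _ _ (fun m => rfl)).symm
  have step2 : ∑ m : Fin n, f (e m) ≤ ∑ m : Fin n, f (Fin.castLE hnk m) := by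
    apply Finset.sum_le_sum
    intro m _
    exact hmono _ _ (Fin.le_def.mpr (key m))
  have step3 : ∑ m : Fin n, f (Fin.castLE hnk m)
      = ∑ j ∈ Finset.univ.filter (fun j : Fin k => (j : ℕ) < n), f j := by
    rw [filter_lt_eq_map hnk, Finset.sum_map]
    rfl
  have step4 : ∑ j ∈ Finset.univ.filter (fun j : Fin k => (j : ℕ) < n), f j
      ≤ ∑ j ∈ Finset.univ.filter (fun j : Fin k => (j : ℕ) < t), f j := by
    apply Finset.sum_le_sum_of_subset_of_nonneg
    · intro j hj
      simp only [Finset.mem_filter, Finset.mem_univ, true_and] at *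
      exact lt_of_lt_of_le hj hU
    · intro j _ _; exact hf0 j
  calc ∑ j ∈ U, f j = ∑ m : Fin n, f (e m) := step1
    _ ≤ _ := step2
    _ = _ := step3
    _ ≤ _ := step4

/-- The maximum of a linear function over the ℓ₀-ball equals `∑ wᵢ xᵢ` plus the sum of
the `t` largest values among the maximum entry contributions `dᵢ⁺`. -/
theorem isGreatest_linear_l0Ball {k : ℕ} (hk : 1 ≤ k) (t : ℕ) (ht : 1 ≤ t) (htk : t ≤ k)
    (w a b x : Fin k → ℝ) (hab : ∀ i, a i ≤ b i) (hx : ∀ i, a i ≤ x i ∧ x i ≤ b i)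
    (σ : Equiv.Perm (Fin k))
    (hσ : ∀ i j : Fin k, i ≤ j →
      max (w (σ j) * (b (σ j) - x (σ j))) (w (σ j) * (a (σ j) - x (σ j))) ≤
        max (w (σ i) * (b (σ i) - x (σ i))) (w (σ i) * (a (σ i) - x (σ i)))) :
    IsGreatest ((fun y : Fin k → ℝ => ∑ i, w i * y i) ''
        {y : Fin k → ℝ | (∀ i, y i ∈ Set.Icc (a i) (b i)) ∧
          (Finset.univ.filter (fun i => y i ≠ x i)).card ≤ t})
      (∑ i, w i * x i +
        ∑ i ∈ Finset.univ.filter (fun i : Fin k => (i : ℕ) < t),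
          max (w (σ i) * (b (σ i) - x (σ i))) (w (σ i) * (a (σ i) - x (σ i)))) := by
  set d : Fin k → ℝ := fun i => max (w i * (b i - x i)) (w i * (a i - x i)) with hd
  have hd0 : ∀ i, 0 ≤ d i := by
    intro i
    rcases le_or_gt 0 (w i) with h | h
    · exact le_max_of_le_left (by nlinarith [(hx i).2, hab i])
    · exact le_max_of_le_right (by nlinarith [(hx i).1])
  have hdle : ∀ i (c : ℝ), a i ≤ c → c ≤ b i → w i * (c - x i) ≤ d i := by
    intro i c h1 h2
    rcases le_or_gt 0 (w i) with h | h
    · exact le_max_of_le_left (by nlinarith)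
    · exact le_max_of_le_right (by nlinarith)
  constructor
  · -- membership: construct the optimal point
    set y : Fin k → ℝ := fun i =>
      if ((σ.symm i : Fin k) : ℕ) < t then
        (if w i * (a i - x i) ≤ w i * (b i - x i) then b i else a i)
      else x i with hy
    refine ⟨y, ⟨?_, ?_⟩, ?_⟩
    · intro i
      simp only [hy]
      split_ifs
      · exact ⟨hab i, le_refl _⟩
      · exact ⟨le_refl _, hab i⟩
      · exact ⟨(hx i).1, (hx i).2⟩
    · have hsub : Finset.univ.filter (fun i => y i ≠ x i)
          ⊆ Finset.univ.filter (fun i : Fin k => ((σ.symm i : Fin k) : ℕ) < t) := by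
        intro i hi
        simp only [Finset.mem_filter, Finset.mem_univ, true_and] at *
        by_contra hc
        exact hi (if_neg hc)
      refine le_trans (Finset.card_le_card hsub) ?_
      have hcard : (Finset.univ.filter (fun i : Fin k => ((σ.symm i : Fin k) : ℕ) < t)).card
          = (Finset.univ.filter (fun j : Fin k => (j : ℕ) < t)).card := by
        apply Finset.card_bij (fun i _ => σ.symm i)
        · intro i hi
          simp only [Finset.mem_filter, Finset.mem_univ, true_and] at *
          exact hi
        · intro i hi i' hi' hii'
          exact σ.symm.injective hii'
        · intro j hj
          simp only [Finset.mem_filter, Finset.mem_univ, true_and] at *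
          exact ⟨σ j, by simpa using hj, by simp⟩
      rw [hcard, filter_lt_eq_map htk, Finset.card_map, Finset.card_univ, Fintype.card_fin]
    · have hterm : ∀ i : Fin k, w i * y i
          = w i * x i + (if ((σ.symm i : Fin k) : ℕ) < t then d i else 0) := by
        intro i
        simp only [hy]
        split_ifs with h1 h2
        · simp only [hd, max_eq_left h2]; ring
        · simp only [hd, max_eq_right (le_of_not_ge h2)]; ring
        · ring
      simp only [hterm]
      rw [Finset.sum_add_distrib, ← Finset.sum_filter]
      congr 1
      refine (Finset.sum_equiv σ (fun i => ?_) (fun i _ => ?_)).symm <;> simp [hd]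
  · -- upper bound
    rintro v ⟨y, ⟨hyb, hycard⟩, rfl⟩
    set T := Finset.univ.filter (fun i => y i ≠ x i) with hT
    have h1 : ∑ i, w i * y i = ∑ i, w i * x i + ∑ i ∈ T, w i * (y i - x i) := by
      have : ∑ i ∈ T, w i * (y i - x i) = ∑ i, w i * (y i - x i) := by
        apply Finset.sum_subset (Finset.subset_univ T)
        intro i _ hi
        simp only [hT, Finset.mem_filter, Finset.mem_univ, true_and, not_not] at hi
        rw [hi]; ring
      rw [this, ← Finset.sum_add_distrib]
      congr 1; ext i; ring
    have h2 : ∑ i ∈ T, w i * (y i - x i) ≤ ∑ i ∈ T, d i :=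
      Finset.sum_le_sum fun i _ => hdle i (y i) (hyb i).1 (hyb i).2
    have h3 : ∑ i ∈ T, d i ≤ ∑ j ∈ Finset.univ.filter (fun j : Fin k => (j : ℕ) < t),
        d (σ j) := by
      have himg : ∑ j ∈ T.image σ.symm, d (σ j) = ∑ i ∈ T, d i := by
        rw [Finset.sum_image (fun i _ i' _ h => σ.symm.injective h)]
        simp
      rw [← himg]
      apply topsum (fun j => d (σ j)) (fun j => hd0 (σ j)) hσ
      rw [Finset.card_image_of_injective _ σ.symm.injective]
      exact hycard
    calc ∑ i, w i * y i = ∑ i, w i * x i + ∑ i ∈ T, w i * (y i - x i) := h1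
      _ ≤ ∑ i, w i * x i + ∑ i ∈ T, d i := by linarith
      _ ≤ _ := by simp only [hd] at h3 ⊢; linarith
end

section
/- The minimum of a linear function $y \mapsto \sum_{i=1}^k w_i y_i$ over the asymmetrically scaled $\ell_1$-ball $\widetilde{\mathcal{B}}_1^t(\bar{x})$ equals $\sum_{i=1}^k w_i \bar{x}_i + t \cdot \min_{i \in [k]} d_i^-$, where $d_i^- = \min(w_i(b_i - \bar{x}_i), w_i(a_i - \bar{x}_i))$. -/
open scoped ENNReal

private lemma mem_aux {k : ℕ} (t : ℕ) (ht : 1 ≤ t) (w a b x : Fin k → ℝ) (j : Fin k) (c : ℝ)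
    (hcase : (c = b j ∧ x j ≤ c) ∨ (c = a j ∧ c ≤ x j)) :
    ∃ y : Fin k → ℝ, (∑ i, deltaE a b x i y ≤ (t : ℝ≥0∞)) ∧
      ∑ i, w i * y i = ∑ i, w i * x i + (t : ℝ) * (w j * (c - x j)) := by
  classical
  by_cases hc : c = x j
  · refine ⟨x, ?_, by rw [hc]; ring⟩
    simp [deltaE]
  · have htpos : (0:ℝ) < (t : ℝ) := by exact_mod_cast ht
    set y := Function.update x j (x j + (t:ℝ) * (c - x j)) with hy
    have hyj : y j = x j + (t:ℝ) * (c - x j) := Function.update_self _ _ _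
    have hyne : ∀ i, i ≠ j → y i = x i := fun i hi => Function.update_of_ne hi _ _
    have hdelta : deltaE a b x j y = (t : ℝ≥0∞) := by
      rcases hcase with ⟨hb, hle⟩ | ⟨ha, hge⟩
      · have hlt : x j < c := lt_of_le_of_ne hle (Ne.symm hc)
        have h1 : x j < y j := by rw [hyj]; nlinarith
        have h2 : y j ≠ x j := ne_of_gt h1
        have h3 : b j ≠ x j := by rw [← hb]; exact hc
        have h4 : (y j - x j) / (b j - x j) = (t : ℝ) := by
          rw [hyj, ← hb]
          have : c - x j ≠ 0 := sub_ne_zero.mpr hc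
          field_simp
          ring
        unfold deltaE
        rw [if_neg h2, if_pos h1, if_neg h3, h4, ENNReal.ofReal_natCast]
      · have hlt : c < x j := lt_of_le_of_ne hge hc
        have h1 : y j < x j := by rw [hyj]; nlinarith
        have h2 : y j ≠ x j := ne_of_lt h1
        have h3 : a j ≠ x j := by rw [← ha]; exact hc
        have h4 : (y j - x j) / (a j - x j) = (t : ℝ) := by
          rw [hyj, ← ha]
          have : c - x j ≠ 0 := sub_ne_zero.mpr hc
          field_simp
          ring
        unfold deltaE
        rw [if_neg h2, if_neg (not_lt.mpr h1.le), if_neg h3, h4, ENNReal.ofReal_natCast]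
    have hsum : ∑ i, deltaE a b x i y = (t : ℝ≥0∞) := by
      rw [Finset.sum_eq_single j]
      · exact hdelta
      · intro i _ hi
        simp [deltaE, hyne i hi]
      · intro h; exact absurd (Finset.mem_univ j) h
    refine ⟨y, le_of_eq hsum, ?_⟩
    have hval : ∑ i, w i * y i - ∑ i, w i * x i = (t : ℝ) * (w j * (c - x j)) := by
      rw [← Finset.sum_sub_distrib, Finset.sum_eq_single j]
      · rw [hyj]; ring
      · intro i _ hi; rw [hyne i hi]; ring
      · intro h; exact absurd (Finset.mem_univ j) h
    linarith

/-- The minimum of a linear function over the asymmetrically scaled ℓ₁-ball equals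
`∑ wᵢ xᵢ + t · minᵢ dᵢ⁻`. -/
theorem isLeast_linear_scaledL1Ball {k : ℕ} (hk : 0 < k) (t : ℕ) (ht : 1 ≤ t) (htk : t ≤ k)
    (w a b x : Fin k → ℝ) (hab : ∀ i, a i ≤ b i) (hx : ∀ i, a i ≤ x i ∧ x i ≤ b i) :
    IsLeast ((fun y : Fin k → ℝ => ∑ i, w i * y i) ''
        {y : Fin k → ℝ | ∑ i, deltaE a b x i y ≤ (t : ℝ≥0∞)})
      (∑ i, w i * x i +
        (t : ℝ) *
          Finset.univ.inf' (Finset.univ_nonempty_iff.mpr (Fin.pos_iff_nonempty.mp hk))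
            (fun i => min (w i * (b i - x i)) (w i * (a i - x i)))) := by
  classical
  set ne : Finset.univ.Nonempty :=
    Finset.univ_nonempty_iff.mpr (Fin.pos_iff_nonempty.mp hk) with hne
  set m : ℝ := Finset.univ.inf' ne (fun i => min (w i * (b i - x i)) (w i * (a i - x i)))
    with hmdef
  have hDle0 : ∀ i : Fin k, min (w i * (b i - x i)) (w i * (a i - x i)) ≤ 0 := by
    intro i
    rcases le_total 0 (w i) with h | h
    · exact (min_le_right _ _).trans (mul_nonpos_of_nonneg_of_nonpos h (by linarith [(hx i).1]))
    · exact (min_le_left _ _).trans (mul_nonpos_of_nonpos_of_nonneg h (by linarith [(hx i).2]))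
  have hm0 : m ≤ 0 := by
    obtain ⟨i0⟩ := Fin.pos_iff_nonempty.mp hk
    exact (Finset.inf'_le _ (Finset.mem_univ i0)).trans (hDle0 i0)
  constructor
  · -- membership
    obtain ⟨j, -, hj⟩ := Finset.exists_mem_eq_inf' ne
      (fun i => min (w i * (b i - x i)) (w i * (a i - x i)))
    rcases min_cases (w j * (b j - x j)) (w j * (a j - x j)) with ⟨h1, -⟩ | ⟨h1, -⟩
    · obtain ⟨y, hy1, hy2⟩ := mem_aux t ht w a b x j (b j) (Or.inl ⟨rfl, (hx j).2⟩)
      refine ⟨y, hy1, ?_⟩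
      show ∑ i, w i * y i = _
      rw [hmdef, hj, h1]
      exact hy2
    · obtain ⟨y, hy1, hy2⟩ := mem_aux t ht w a b x j (a j) (Or.inr ⟨rfl, (hx j).1⟩)
      refine ⟨y, hy1, ?_⟩
      show ∑ i, w i * y i = _
      rw [hmdef, hj, h1]
      exact hy2
  · -- lower bound
    rintro v ⟨y, hy, rfl⟩
    simp only [Set.mem_setOf_eq] at hy
    have hfin : ∀ i, deltaE a b x i y ≠ ⊤ := by
      intro i
      have h1 : deltaE a b x i y ≤ (t : ℝ≥0∞) :=
        (Finset.single_le_sum (f := fun i => deltaE a b x i y)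
          (fun _ _ => zero_le) (Finset.mem_univ i)).trans hy
      exact ne_top_of_le_ne_top (ENNReal.natCast_ne_top t) h1
    set δ : Fin k → ℝ := fun i => (deltaE a b x i y).toReal with hδ
    have hδnn : ∀ i, 0 ≤ δ i := fun i => ENNReal.toReal_nonneg
    have hδsum : ∑ i, δ i ≤ (t : ℝ) := by
      have h1 := ENNReal.toReal_mono (ENNReal.natCast_ne_top t) hy
      rwa [ENNReal.toReal_sum (fun i _ => hfin i), ENNReal.toReal_natCast] at h1
    have hmle : ∀ i : Fin k, m ≤ min (w i * (b i - x i)) (w i * (a i - x i)) :=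
      fun i => Finset.inf'_le _ (Finset.mem_univ i)
    have key : ∀ i : Fin k, w i * x i + δ i * m ≤ w i * y i := by
      intro i
      by_cases hcase : y i = x i
      · have : δ i = 0 := by simp [hδ, deltaE, hcase]
        rw [this, hcase]; simp
      · by_cases hlt : x i < y i
        · have hbne : b i ≠ x i := by
            intro hb
            exact hfin i (by simp [deltaE, hcase, hlt, hb])
          have hbgt : x i < b i := lt_of_le_of_ne (hx i).2 (Ne.symm hbne)
          have hratnn : (0:ℝ) ≤ (y i - x i) / (b i - x i) := by
            apply div_nonneg <;> linarith
          have hδi : δ i = (y i - x i) / (b i - x i) := by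
            simp [hδ, deltaE, hcase, hlt, hbne, ENNReal.toReal_ofReal hratnn]
          have heq : w i * y i - w i * x i = δ i * (w i * (b i - x i)) := by
            rw [hδi]
            have hne2 : b i - x i ≠ 0 := sub_ne_zero.mpr (by linarith)
            field_simp
          have h2 : δ i * m ≤ δ i * (w i * (b i - x i)) :=
            mul_le_mul_of_nonneg_left ((hmle i).trans (min_le_left _ _)) (hδnn i)
          linarith
        · have hylt : y i < x i := lt_of_le_of_ne (not_lt.mp hlt) hcase
          have hane : a i ≠ x i := by
            intro ha
            exact hfin i (by simp [deltaE, hcase, hlt, ha])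
          have hagt : a i < x i := lt_of_le_of_ne (hx i).1 hane
          have hratnn : (0:ℝ) ≤ (y i - x i) / (a i - x i) := by
            rw [div_nonneg_iff]
            right
            constructor <;> linarith
          have hδi : δ i = (y i - x i) / (a i - x i) := by
            simp [hδ, deltaE, hcase, hlt, hane, ENNReal.toReal_ofReal hratnn]
          have heq : w i * y i - w i * x i = δ i * (w i * (a i - x i)) := by
            rw [hδi]
            have hne2 : a i - x i ≠ 0 := by intro h; apply hane; linarith [sub_eq_zero.mp h]
            field_simp
          have h2 : δ i * m ≤ δ i * (w i * (a i - x i)) :=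
            mul_le_mul_of_nonneg_left ((hmle i).trans (min_le_right _ _)) (hδnn i)
          linarith
    have hstep : ∑ i, (w i * x i + δ i * m) ≤ ∑ i, w i * y i :=
      Finset.sum_le_sum (fun i _ => key i)
    have hsplit : ∑ i, (w i * x i + δ i * m) = ∑ i, w i * x i + (∑ i, δ i) * m := by
      rw [Finset.sum_add_distrib, Finset.sum_mul]
    have hlast : (t : ℝ) * m ≤ (∑ i, δ i) * m :=
      mul_le_mul_of_nonpos_right hδsum hm0
    linarith
end

section
/- The Lebesgue measure of $\Delta_{k,d,t} = \{z \in ([0,\infty)^d)^k \mid \sum_{i=1}^k \max_{j \in [d]} z_i^{(j)} \leq t\}$ in $\mathbb{R}^{dk}$ equals $\frac{t^{dk} (d!)^k}{(dk)!}$. -/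
open MeasureTheory Finset
open scoped ENNReal

namespace VolMCS

/-! ### Generic helpers -/

section Haar

variable {E : Type*} [NormedAddCommGroup E] [NormedSpace ℝ E] [MeasurableSpace E]
  [BorelSpace E] [FiniteDimensional ℝ E]

lemma null_of_linear (μ : Measure E) [μ.IsAddHaarMeasure] (L : E →ₗ[ℝ] ℝ) (z₀ : E)
    (h : L z₀ ≠ 0) : μ {x | L x = 0} = 0 := by
  have hker : {x | L x = 0} = (LinearMap.ker L : Set E) := by
    ext x; simp [LinearMap.mem_ker]
  rw [hker]
  refine Measure.addHaar_submodule μ _ fun htop => h ?_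
  have : z₀ ∈ LinearMap.ker L := htop ▸ Submodule.mem_top
  simpa [LinearMap.mem_ker] using this

lemma measurePreserving_of_det_one (μ : Measure E) [μ.IsAddHaarMeasure] (e : E ≃ₗ[ℝ] E)
    (hdet : LinearMap.det (e : E →ₗ[ℝ] E) = 1) : MeasurePreserving e μ μ := by
  have hmeas : Measurable (⇑e) :=
    (LinearMap.continuous_of_finiteDimensional (e : E →ₗ[ℝ] E)).measurable
  refine ⟨hmeas, ?_⟩
  ext s hs
  rw [Measure.map_apply hmeas hs, Measure.addHaar_preimage_linearEquiv,
    LinearEquiv.det_coe_symm, hdet]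
  simp

end Haar

lemma tile {X α : Type*} [MeasurableSpace X] {μ : Measure X} (G : Finset α) (P : α → Set X)
    {N : Set X} (hN : μ N = 0) (hm : ∀ a ∈ G, NullMeasurableSet (P a) μ)
    (hdis : ∀ a ∈ G, ∀ b ∈ G, a ≠ b → P a ∩ P b ⊆ N) {v : ℝ≥0∞}
    (hv : ∀ a ∈ G, μ (P a) = v) : μ (⋃ a ∈ G, P a) = G.card * v := by
  rw [measure_biUnion_finset₀
    (fun a ha b hb hab => measure_mono_null (hdis a ha b hb hab) hN) hm]
  rw [Finset.sum_congr rfl hv, Finset.sum_const, nsmul_eq_mul]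

lemma measurable_sup'' {X ι : Type*} [MeasurableSpace X] {s : Finset ι} (hs : s.Nonempty)
    (f : ι → X → ℝ) (hf : ∀ i, Measurable (f i)) :
    Measurable fun x => s.sup' hs fun i => f i x := by
  classical
  induction s using Finset.cons_induction with
  | empty => exact absurd hs (by simp)
  | cons a s ha ih =>
    rcases s.eq_empty_or_nonempty with rfl | hne
    · simpa using hf a
    · simp only [Finset.sup'_cons hne]
      exact (hf a).sup (ih hne)

lemma measurableSet_monotone {X : Type*} [MeasurableSpace X] {m : ℕ} (g : X → Fin m → ℝ)
    (hg : ∀ j, Measurable fun x => g x j) : MeasurableSet {x | Monotone (g x)} := by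
  have hset : {x | Monotone (g x)} = ⋂ (a) (b), {x | a ≤ b → g x a ≤ g x b} := by
    ext x
    simp only [Set.mem_iInter, Set.mem_setOf_eq]
    exact ⟨fun h a b hab => h hab, fun h a b hab => h a b hab⟩
  rw [hset]
  refine MeasurableSet.iInter fun a => MeasurableSet.iInter fun b => ?_
  by_cases hab : a ≤ b
  · have : {x | a ≤ b → g x a ≤ g x b} = {x | g x a ≤ g x b} := by ext x; simp [hab]
    rw [this]; exact measurableSet_le (hg a) (hg b)
  · have : {x | a ≤ b → g x a ≤ g x b} = Set.univ := by ext x; simp [hab]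
    rw [this]; exact MeasurableSet.univ

lemma sup'_comp_perm {m : ℕ} (H : (univ : Finset (Fin m)).Nonempty) (y : Fin m → ℝ)
    (σ : Equiv.Perm (Fin m)) :
    univ.sup' H (fun j => y (σ j)) = univ.sup' H y := by
  apply le_antisymm
  · exact Finset.sup'_le _ _ fun j _ => Finset.le_sup' y (mem_univ (σ j))
  · refine Finset.sup'_le _ _ fun j _ => ?_
    simpa only [Equiv.apply_symm_apply] using Finset.le_sup' (fun j => y (σ j)) (mem_univ (σ.symm j))

lemma sup'_of_monotone {m : ℕ} (H : (univ : Finset (Fin (m+1))).Nonempty)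
    (f : Fin (m+1) → ℝ) (hf : Monotone f) :
    univ.sup' H f = f (Fin.last m) :=
  le_antisymm (Finset.sup'_le _ _ fun j _ => hf (Fin.le_last j))
    (Finset.le_sup' f (mem_univ _))

/-! ### Partial sums linear map -/

def psum (m : ℕ) : (Fin m → ℝ) →ₗ[ℝ] (Fin m → ℝ) where
  toFun y := fun i => ∑ j, if j ≤ i then y j else 0
  map_add' y z := by
    funext i
    show _ = (∑ j, if j ≤ i then y j else 0) + (∑ j, if j ≤ i then z j else 0)
    rw [← Finset.sum_add_distrib]
    refine Finset.sum_congr rfl fun j _ => ?_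
    by_cases h : j ≤ i <;> simp [h]
  map_smul' c y := by
    funext i
    simp only [RingHom.id_apply, Pi.smul_apply, smul_eq_mul]
    rw [Finset.mul_sum]
    refine Finset.sum_congr rfl fun j _ => ?_
    by_cases h : j ≤ i <;> simp [h]

lemma psum_apply (m : ℕ) (y : Fin m → ℝ) (i : Fin m) :
    psum m y i = ∑ j, if j ≤ i then y j else 0 := rfl

lemma psum_at_zero {m : ℕ} (y : Fin (m+1) → ℝ) : psum (m+1) y 0 = y 0 := by
  rw [psum_apply]
  rw [Finset.sum_eq_single 0 (fun j _ hj => if_neg fun h => hj (Fin.le_zero_iff.mp h))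
    (fun h => absurd (mem_univ _) h)]
  simp

lemma psum_succ_sub {m : ℕ} (y : Fin (m+1) → ℝ) (i : Fin m) :
    psum (m+1) y i.succ - psum (m+1) y i.castSucc = y i.succ := by
  rw [psum_apply, psum_apply, ← Finset.sum_sub_distrib]
  have key : ∀ j : Fin (m+1),
      ((if j ≤ i.succ then y j else 0) - (if j ≤ i.castSucc then y j else 0))
        = if j = i.succ then y j else 0 := by
    intro j
    by_cases h1 : j ≤ i.castSucc
    · have h2 : j ≤ i.succ := h1.trans (Fin.castSucc_lt_succ : i.castSucc < i.succ).le
      have h3 : j ≠ i.succ := by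
        intro e
        rw [e] at h1
        exact absurd h1 (Fin.castSucc_lt_succ : i.castSucc < i.succ).not_ge
      simp [h1, h2, h3]
    · by_cases h2 : j ≤ i.succ
      · have h3 : j = i.succ :=
          le_antisymm h2 (not_lt.mp fun hlt => h1 (Fin.le_castSucc_iff.mpr hlt))
        simp [h1, h2, h3]
      · have h3 : j ≠ i.succ := fun e => h2 (le_of_eq e)
        simp [h1, h2, h3]
  rw [Finset.sum_congr rfl fun j _ => key j, Finset.sum_ite_eq' univ i.succ y,
    if_pos (mem_univ _)]

lemma psum_last {m : ℕ} (y : Fin (m+1) → ℝ) : psum (m+1) y (Fin.last m) = ∑ j, y j := by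
  rw [psum_apply]
  exact Finset.sum_congr rfl fun j _ => if_pos (Fin.le_last j)

lemma psum_monotone_of_nonneg {m : ℕ} {y : Fin m → ℝ} (hy : ∀ j, 0 ≤ y j) :
    Monotone (psum m y) := by
  intro a b hab
  rw [psum_apply, psum_apply]
  refine Finset.sum_le_sum fun j _ => ?_
  by_cases h : j ≤ a
  · rw [if_pos h, if_pos (h.trans hab)]
  · rw [if_neg h]
    by_cases h2 : j ≤ b <;> simp [h2, hy j]

lemma psum_nonneg {m : ℕ} {y : Fin m → ℝ} (hy : ∀ j, 0 ≤ y j) (i : Fin m) :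
    0 ≤ psum m y i := by
  rw [psum_apply]
  refine Finset.sum_nonneg fun j _ => ?_
  by_cases h : j ≤ i <;> simp [h, hy j]

lemma psum_le_total {m : ℕ} {y : Fin m → ℝ} (hy : ∀ j, 0 ≤ y j) (i : Fin m) :
    psum m y i ≤ ∑ j, y j := by
  rw [psum_apply]
  refine Finset.sum_le_sum fun j _ => ?_
  by_cases h : j ≤ i <;> simp [h, hy j]

lemma nonneg_of_psum {m : ℕ} {y : Fin (m+1) → ℝ} (h0 : 0 ≤ psum (m+1) y 0)
    (hm : Monotone (psum (m+1) y)) : ∀ j, 0 ≤ y j := by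
  intro j
  induction j using Fin.cases with
  | zero => rw [← psum_at_zero y]; exact h0
  | succ i =>
    have h1 := psum_succ_sub y i
    have h2 : psum (m+1) y i.castSucc ≤ psum (m+1) y i.succ := hm (Fin.castSucc_lt_succ : i.castSucc < i.succ).le
    linarith

lemma psum_injective (m : ℕ) : Function.Injective (psum m) := by
  have hcore : ∀ y : Fin m → ℝ, psum m y = 0 → y = 0 := by
    intro y h
    have key : ∀ l : ℕ, ∀ i : Fin m, (i : ℕ) < l → y i = 0 := by
      intro l
      induction l with
      | zero => exact fun i hi => absurd hi (Nat.not_lt_zero _)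
      | succ l ih =>
        intro i hi
        have h0 : psum m y i = 0 := congrFun h i
        rw [psum_apply] at h0
        have hsingle : ∑ j, (if j ≤ i then y j else 0) = y i := by
          rw [Finset.sum_eq_single i (fun j _ hj => ?_) (fun h => absurd (mem_univ _) h)]
          · simp
          · by_cases hle : j ≤ i
            · rw [if_pos hle]
              have hlt : j < i := lt_of_le_of_ne hle hj
              exact ih j (lt_of_lt_of_le (Fin.lt_iff_val_lt_val.mp hlt) (Nat.lt_succ_iff.mp hi))
            · exact if_neg hle
        rw [hsingle] at h0
        exact h0
    funext i
    exact key m i i.isLt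
  intro y z h
  have : psum m (y - z) = 0 := by rw [map_sub, h, sub_self]
  have := hcore _ this
  exact sub_eq_zero.mp this

noncomputable def psumEquiv (m : ℕ) : (Fin m → ℝ) ≃ₗ[ℝ] (Fin m → ℝ) :=
  LinearEquiv.ofInjectiveEndo (psum m) (psum_injective m)

lemma psumEquiv_apply (m : ℕ) (y : Fin m → ℝ) : psumEquiv m y = psum m y :=
  congrFun (LinearEquiv.coe_ofInjectiveEndo _ _) y

lemma psum_det (m : ℕ) : LinearMap.det (psum m) = 1 := by
  rw [← LinearMap.det_toMatrix']
  have hM : LinearMap.toMatrix' (psum m)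
      = Matrix.of (fun i j : Fin m => if j ≤ i then (1:ℝ) else 0) := by
    ext i j
    rw [LinearMap.toMatrix'_apply, psum_apply]
    have key : ∀ j' : Fin m, (if j' ≤ i then (if j' = j then (1:ℝ) else 0) else 0)
        = if j' = j then (if j ≤ i then 1 else 0) else 0 := by
      intro j'
      by_cases h1 : j' = j
      · subst h1; simp
      · simp [h1]
    simp only [Pi.single_apply]
    rw [Finset.sum_congr rfl fun j' _ => key j', Finset.sum_ite_eq' univ j _,
      if_pos (mem_univ _)]
    rfl
  rw [hM]
  refine (Matrix.det_of_lowerTriangular _ ?_).trans ?_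
  · intro i j hij
    have hij' : i < j := OrderDual.toDual_lt_toDual.mp hij
    exact if_neg (not_le.mpr hij')
  · simp

lemma psum_measurePreserving (m : ℕ) :
    MeasurePreserving (⇑(psumEquiv m)) volume volume := by
  refine measurePreserving_of_det_one volume (psumEquiv m) ?_
  have : ((psumEquiv m : (Fin m → ℝ) ≃ₗ[ℝ] (Fin m → ℝ)) : (Fin m → ℝ) →ₗ[ℝ] (Fin m → ℝ))
      = psum m := LinearMap.ext fun y => psumEquiv_apply m y
  rw [this, psum_det]

/-! ### Volume of the standard simplex -/

lemma volume_simplex (n : ℕ) {t : ℝ} (ht : 0 < t) :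
    volume {y : Fin n → ℝ | (∀ i, 0 ≤ y i) ∧ ∑ i, y i ≤ t} =
      ENNReal.ofReal (t ^ n / (Nat.factorial n : ℝ)) := by
  rcases n with _ | m
  · have hset : {y : Fin 0 → ℝ | (∀ i, 0 ≤ y i) ∧ ∑ i, y i ≤ t} = Set.univ := by
      ext y
      simp [ht.le]
    rw [hset, volume_pi, Measure.pi_univ]
    simp [Nat.factorial]
  · set Q : Equiv.Perm (Fin (m+1)) → Set (Fin (m+1) → ℝ) :=
      fun σ => {x | (∀ i, x i ∈ Set.Icc (0:ℝ) t) ∧ Monotone (x ∘ σ)} with hQdef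
    set N : Set (Fin (m+1) → ℝ) :=
      ⋃ (p : Fin (m+1) × Fin (m+1)) (_ : p.1 ≠ p.2), {x | x p.1 = x p.2} with hNdef
    have hN : volume N = 0 := by
      refine measure_iUnion_null fun p => measure_iUnion_null fun hp => ?_
      have hset : {x : Fin (m+1) → ℝ | x p.1 = x p.2}
          = {x : Fin (m+1) → ℝ |
              (((LinearMap.proj p.1 : (Fin (m+1) → ℝ) →ₗ[ℝ] ℝ)
                - (LinearMap.proj p.2 : (Fin (m+1) → ℝ) →ₗ[ℝ] ℝ))) x = 0} := by
        ext x
        simp [sub_eq_zero]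
      rw [hset]
      refine null_of_linear volume _ (fun j => if j = p.1 then (1:ℝ) else 0) ?_
      have h2 : (if p.2 = p.1 then (1:ℝ) else 0) = 0 := if_neg fun e => hp e.symm
      simp [h2]
    have hQm : ∀ σ, MeasurableSet (Q σ) := by
      intro σ
      have hsplit : Q σ = {x : Fin (m+1) → ℝ | ∀ i, x i ∈ Set.Icc (0:ℝ) t}
          ∩ {x : Fin (m+1) → ℝ | Monotone (x ∘ σ)} := rfl
      rw [hsplit]
      refine MeasurableSet.inter ?_
        (measurableSet_monotone (fun x => x ∘ σ) (fun j => measurable_pi_apply _))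
      rw [Set.setOf_forall]
      exact MeasurableSet.iInter fun i =>
        (measurable_pi_apply i) measurableSet_Icc
    have hQv : ∀ σ, volume (Q σ) = volume (Q 1) := by
      intro σ
      have hmp := (volume_measurePreserving_piCongrLeft (fun _ : Fin (m+1) => ℝ) σ).symm
      have hR : ∀ x : Fin (m+1) → ℝ,
          (MeasurableEquiv.piCongrLeft (fun _ : Fin (m+1) => ℝ) σ).symm x = x ∘ σ := by
        intro x
        funext j
        exact Equiv.piCongrLeft_symm_apply (fun _ => ℝ) σ x j
      have hpre : (MeasurableEquiv.piCongrLeft (fun _ : Fin (m+1) => ℝ) σ).symm ⁻¹' (Q 1)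
          = Q σ := by
        ext x
        simp only [Set.mem_preimage, hR, hQdef, Set.mem_setOf_eq]
        constructor
        · rintro ⟨hIcc, hmono⟩
          refine ⟨fun i => by simpa using hIcc (σ.symm i), ?_⟩
          simpa using hmono
        · rintro ⟨hIcc, hmono⟩
          exact ⟨fun i => hIcc (σ i), by simpa using hmono⟩
      rw [← hpre]
      exact hmp.measure_preimage (hQm 1).nullMeasurableSet
    have hcover : {x : Fin (m+1) → ℝ | ∀ i, x i ∈ Set.Icc (0:ℝ) t}
        = ⋃ σ ∈ (univ : Finset (Equiv.Perm (Fin (m+1)))), Q σ := by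
      ext x
      simp only [Set.mem_iUnion, Set.mem_setOf_eq, mem_univ, exists_true_left, hQdef,
        exists_prop, true_and]
      constructor
      · intro hx
        exact ⟨Tuple.sort x, hx, Tuple.monotone_sort x⟩
      · rintro ⟨σ, hσ, -⟩
        exact hσ
    have hdisj : ∀ σ τ : Equiv.Perm (Fin (m+1)), σ ≠ τ → Q σ ∩ Q τ ⊆ N := by
      rintro σ τ hst x ⟨⟨-, h1⟩, ⟨-, h2⟩⟩
      have heq := Tuple.unique_monotone h1 h2
      by_contra hxN
      apply hst
      have hinj : Function.Injective x := by
        intro a b hab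
        by_contra hne
        exact hxN (Set.mem_iUnion.mpr ⟨(a, b), Set.mem_iUnion.mpr ⟨hne, hab⟩⟩)
      exact Equiv.ext fun j => hinj (congrFun heq j)
    have hcube : volume {x : Fin (m+1) → ℝ | ∀ i, x i ∈ Set.Icc (0:ℝ) t}
        = ENNReal.ofReal (t ^ (m+1)) := by
      have hps : {x : Fin (m+1) → ℝ | ∀ i, x i ∈ Set.Icc (0:ℝ) t}
          = Set.pi Set.univ (fun _ => Set.Icc (0:ℝ) t) := by
        ext x; simp [Set.mem_pi, Pi.le_def, forall_and]
      rw [hps, volume_pi_pi]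
      simp [Real.volume_Icc, ENNReal.ofReal_pow ht.le]
    have htile := tile (univ : Finset (Equiv.Perm (Fin (m+1)))) Q hN
      (fun σ _ => (hQm σ).nullMeasurableSet) (fun σ _ τ _ h => hdisj σ τ h)
      (fun σ _ => hQv σ)
    rw [← hcover, hcube] at htile
    have hSQ : (⇑(psumEquiv (m+1)) ⁻¹' Q 1)
        = {y : Fin (m+1) → ℝ | (∀ i, 0 ≤ y i) ∧ ∑ i, y i ≤ t} := by
      ext y
      rw [Set.mem_preimage]
      have hco : (psumEquiv (m+1)) y = psum (m+1) y := psumEquiv_apply (m+1) y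
      simp only [hQdef, Set.mem_setOf_eq, hco]
      constructor
      · rintro ⟨hIcc, hmono'⟩
        have hmono : Monotone (psum (m+1) y) := by simpa using hmono'
        have hy : ∀ j, 0 ≤ y j := nonneg_of_psum (hIcc 0).1 hmono
        refine ⟨hy, ?_⟩
        rw [← psum_last y]
        exact (hIcc (Fin.last m)).2
      · rintro ⟨hy, hsum⟩
        refine ⟨fun i => ⟨psum_nonneg hy i, ?_⟩, ?_⟩
        · calc psum (m+1) y i ≤ ∑ j, y j := psum_le_total hy i
            _ ≤ t := hsum
        · simpa using psum_monotone_of_nonneg hy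
    have hSvol : volume {y : Fin (m+1) → ℝ | (∀ i, 0 ≤ y i) ∧ ∑ i, y i ≤ t}
        = volume (Q 1) := by
      rw [← hSQ]
      exact (psum_measurePreserving (m+1)).measure_preimage (hQm 1).nullMeasurableSet
    have hcard : (((univ : Finset (Equiv.Perm (Fin (m+1)))).card : ℝ≥0∞))
        = ((Nat.factorial (m+1) : ℕ) : ℝ≥0∞) := by
      rw [Finset.card_univ, Fintype.card_perm, Fintype.card_fin]
    rw [hcard] at htile
    rw [hSvol]
    have hfac0 : ((Nat.factorial (m+1) : ℕ) : ℝ≥0∞) ≠ 0 := by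
      simp [Nat.factorial_ne_zero]
    have hfacT : ((Nat.factorial (m+1) : ℕ) : ℝ≥0∞) ≠ ⊤ := by simp
    have := (ENNReal.eq_div_iff hfac0 hfacT).mpr htile.symm
    rw [this]
    rw [ENNReal.ofReal_div_of_pos (by exact_mod_cast Nat.factorial_pos (m+1)),
      ENNReal.ofReal_natCast]

/-! ### Flattening `Fin k → Fin d → ℝ` to `Fin (d*k) → ℝ` -/

lemma flatten (d : ℕ) (k : ℕ) : ∃ F : (Fin k → Fin d → ℝ) → (Fin (d*k) → ℝ),
    MeasurePreserving F volume volume ∧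
    ∀ z, ((∀ p, 0 ≤ F z p) ↔ ∀ i j, 0 ≤ z i j) ∧ (∑ p, F z p = ∑ i, ∑ j, z i j) := by
  induction k with
  | zero =>
    haveI hempty : IsEmpty (Fin (d*0)) := ⟨fun p => absurd p.2 (by omega)⟩
    refine ⟨fun _ _ => 0, ⟨measurable_const, ?_⟩, fun z => ⟨by simp, by simp⟩⟩
    have huniv1 : volume (Set.univ : Set (Fin 0 → Fin d → ℝ)) = 1 := by
      rw [volume_pi, Measure.pi_univ]; simp
    have huniv2 : volume (Set.univ : Set (Fin (d*0) → ℝ)) = 1 := by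
      rw [volume_pi, Measure.pi_univ]; simp
    refine Measure.ext fun s hs => ?_
    rw [Measure.map_apply measurable_const hs]
    rcases Set.eq_empty_or_nonempty s with rfl | ⟨x, hx⟩
    · simp
    · haveI : Subsingleton (Fin (d*0) → ℝ) := ⟨fun a b => funext fun p => isEmptyElim p⟩
      have hsu : s = Set.univ := Set.eq_univ_of_forall fun y => (Subsingleton.elim y x) ▸ hx
      rw [hsu, Set.preimage_univ, huniv1, huniv2]
  | succ k ih =>
    obtain ⟨f, hfm, hfinv⟩ := ih
    have hdk : d + d * k = d * (k+1) := by ring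
    set σeq : (Fin d ⊕ Fin (d*k)) ≃ Fin (d*(k+1)) := finSumFinEquiv.trans (finCongr hdk)
      with hσeq
    let F : (Fin (k+1) → Fin d → ℝ) → (Fin (d*(k+1)) → ℝ) := fun z =>
      (MeasurableEquiv.piCongrLeft (fun _ => ℝ) σeq)
        ((MeasurableEquiv.sumPiEquivProdPi (fun _ : Fin d ⊕ Fin (d*k) => ℝ)).symm
          (Prod.map id f
            ((MeasurableEquiv.piFinSuccAbove (fun _ : Fin (k+1) => Fin d → ℝ) 0) z)))
    have hpcl : ∀ (g : (Fin d ⊕ Fin (d*k)) → ℝ) (p : Fin (d*(k+1))),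
        (MeasurableEquiv.piCongrLeft (fun _ => ℝ) σeq) g p = g (σeq.symm p) := by
      intro g p
      conv_lhs => rw [← Equiv.apply_symm_apply σeq p]
      rw [MeasurableEquiv.piCongrLeft_apply_apply]
    have he1 : ∀ z : Fin (k+1) → Fin d → ℝ,
        (MeasurableEquiv.piFinSuccAbove (fun _ : Fin (k+1) => Fin d → ℝ) 0) z
          = (z 0, fun i => z i.succ) := by
      intro z
      rw [MeasurableEquiv.piFinSuccAbove_apply, Fin.insertNthEquiv_symm_apply,
        Fin.removeNth_zero]
      rfl
    refine ⟨F, ?_, ?_⟩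
    · have h1 := volume_preserving_piFinSuccAbove (fun _ : Fin (k+1) => Fin d → ℝ) 0
      have h2 : MeasurePreserving (Prod.map (id : (Fin d → ℝ) → (Fin d → ℝ)) f)
          volume volume := by
        rw [Measure.volume_eq_prod, Measure.volume_eq_prod]
        exact (MeasurePreserving.id volume).prod hfm
      have h3 := volume_measurePreserving_sumPiEquivProdPi_symm
        (fun _ : Fin d ⊕ Fin (d*k) => ℝ)
      have h4 := volume_measurePreserving_piCongrLeft (fun _ => ℝ) σeq
      exact ((h4.comp h3).comp h2).comp h1
    · intro z
      set w : Fin (d*k) → ℝ := f (fun i => z i.succ) with hw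
      have hFz : ∀ p, F z p
          = ((MeasurableEquiv.sumPiEquivProdPi (fun _ : Fin d ⊕ Fin (d*k) => ℝ)).symm
              (z 0, w)) (σeq.symm p) := by
        intro p
        show (MeasurableEquiv.piCongrLeft (fun _ => ℝ) σeq) _ p = _
        rw [he1 z]
        exact hpcl _ p
      have hGl : ∀ j, ((MeasurableEquiv.sumPiEquivProdPi
          (fun _ : Fin d ⊕ Fin (d*k) => ℝ)).symm (z 0, w)) (Sum.inl j) = z 0 j := fun j => rfl
      have hGr : ∀ q, ((MeasurableEquiv.sumPiEquivProdPi
          (fun _ : Fin d ⊕ Fin (d*k) => ℝ)).symm (z 0, w)) (Sum.inr q) = w q := fun q => rfl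
      constructor
      · constructor
        · intro h i j
          have hl : ∀ j', 0 ≤ z 0 j' := by
            intro j'
            have := h (σeq (Sum.inl j'))
            rwa [hFz, Equiv.symm_apply_apply, hGl] at this
          have hr : ∀ q, 0 ≤ w q := by
            intro q
            have := h (σeq (Sum.inr q))
            rwa [hFz, Equiv.symm_apply_apply, hGr] at this
          induction i using Fin.cases with
          | zero => exact hl j
          | succ i => exact ((hfinv _).1.mp hr) i j
        · intro h p
          rw [hFz]
          rcases hs : (σeq.symm p) with j | q
          · rw [hGl]; exact h 0 j
          · rw [hGr]; exact ((hfinv _).1.mpr (fun i j => h i.succ j)) q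
      · have hsum : ∑ p, F z p = ∑ s, ((MeasurableEquiv.sumPiEquivProdPi
            (fun _ : Fin d ⊕ Fin (d*k) => ℝ)).symm (z 0, w)) s := by
          rw [Finset.sum_congr rfl fun p _ => hFz p]
          exact Equiv.sum_comp σeq.symm _
        rw [hsum, Fintype.sum_sum_type]
        rw [Finset.sum_congr rfl fun j _ => hGl j, Finset.sum_congr rfl fun q _ => hGr q]
        rw [(hfinv _).2, Fin.sum_univ_succ (f := fun i => ∑ j, z i j)]

end VolMCS

open VolMCS in
/-- `vol(Δ_{k,d,t}) = t^{dk} (d!)^k / (dk)!`. -/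
theorem volume_multiChannel_simplex {k d : ℕ} (hk : 1 ≤ k) (hd : 0 < d)
    (t : ℝ) (ht : 0 < t) :
    MeasureTheory.volume
        {z : Fin k → Fin d → ℝ | (∀ i j, 0 ≤ z i j) ∧
          ∑ i, Finset.univ.sup' (Finset.univ_nonempty_iff.mpr (Fin.pos_iff_nonempty.mp hd))
            (fun j => z i j) ≤ t} =
      ENNReal.ofReal (t ^ (d * k) * (Nat.factorial d : ℝ) ^ k / (Nat.factorial (d * k))) := by
  obtain ⟨m, rfl⟩ : ∃ m, d = m + 1 := ⟨d - 1, by omega⟩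
  have H : (Finset.univ : Finset (Fin (m+1))).Nonempty :=
    Finset.univ_nonempty_iff.mpr (Fin.pos_iff_nonempty.mp hd)
  set Δ : Set (Fin k → Fin (m+1) → ℝ) :=
    {z | (∀ i j, 0 ≤ z i j) ∧ ∑ i, univ.sup' H (fun j => z i j) ≤ t} with hΔdef
  show volume Δ = _
  set P : (Fin k → Equiv.Perm (Fin (m+1))) → Set (Fin k → Fin (m+1) → ℝ) := fun σ =>
    {z | ((∀ i j, 0 ≤ z i j) ∧ ∑ i, univ.sup' H (fun j => z i j) ≤ t) ∧
      ∀ i, Monotone (fun j => z i (σ i j))} with hPdef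
  -- measurability
  have hmeas_nonneg : MeasurableSet {z : Fin k → Fin (m+1) → ℝ | ∀ i j, 0 ≤ z i j} := by
    rw [Set.setOf_forall]
    refine MeasurableSet.iInter fun i => ?_
    rw [Set.setOf_forall]
    refine MeasurableSet.iInter fun j => ?_
    exact measurableSet_le measurable_const
      ((measurable_pi_apply j).comp (measurable_pi_apply i))
  have hmeas_sum : Measurable fun z : Fin k → Fin (m+1) → ℝ =>
      ∑ i, univ.sup' H (fun j => z i j) :=
    Finset.measurable_sum _ (fun i _ => measurable_sup'' H (fun j (z : Fin k → Fin (m+1) → ℝ) => z i j)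
      (fun j => (measurable_pi_apply j).comp (measurable_pi_apply i)))
  have hΔm : MeasurableSet Δ := by
    rw [hΔdef, Set.setOf_and]
    exact hmeas_nonneg.inter (measurableSet_le hmeas_sum measurable_const)
  have hPm : ∀ σ, MeasurableSet (P σ) := by
    intro σ
    have hsplit : P σ = Δ ∩ {z | ∀ i, Monotone (fun j => z i (σ i j))} := rfl
    rw [hsplit]
    refine hΔm.inter ?_
    rw [Set.setOf_forall]
    exact MeasurableSet.iInter fun i => measurableSet_monotone
      (fun (z : Fin k → Fin (m+1) → ℝ) => fun j => z i (σ i j))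
      (fun j => (measurable_pi_apply _).comp (measurable_pi_apply i))
  -- null set
  set N : Set (Fin k → Fin (m+1) → ℝ) :=
    ⋃ (i : Fin k) (p : Fin (m+1) × Fin (m+1)) (_ : p.1 ≠ p.2), {z | z i p.1 = z i p.2}
    with hNdef
  have hN : volume N = 0 := by
    refine measure_iUnion_null fun i => measure_iUnion_null fun p =>
      measure_iUnion_null fun hp => ?_
    have hset : {z : Fin k → Fin (m+1) → ℝ | z i p.1 = z i p.2}
        = {z : Fin k → Fin (m+1) → ℝ |
            ((((LinearMap.proj p.1 : (Fin (m+1) → ℝ) →ₗ[ℝ] ℝ)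
              - (LinearMap.proj p.2 : (Fin (m+1) → ℝ) →ₗ[ℝ] ℝ)).comp
                (LinearMap.proj i : (Fin k → Fin (m+1) → ℝ) →ₗ[ℝ] (Fin (m+1) → ℝ)))) z
              = 0} := by
      ext z
      simp [sub_eq_zero]
    rw [hset]
    refine null_of_linear volume _ (fun _ j => if j = p.1 then (1:ℝ) else 0) ?_
    have h2 : (if p.2 = p.1 then (1:ℝ) else 0) = 0 := if_neg fun e => hp e.symm
    simp [h2]
  -- covering
  have hcover : Δ = ⋃ σ ∈ (univ : Finset (Fin k → Equiv.Perm (Fin (m+1)))), P σ := by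
    ext z
    simp only [Set.mem_iUnion, mem_univ, exists_prop, true_and, hPdef, Set.mem_setOf_eq,
      hΔdef]
    constructor
    · intro hz
      exact ⟨fun i => Tuple.sort (z i), hz, fun i => Tuple.monotone_sort (z i)⟩
    · rintro ⟨σ, hz, -⟩
      exact hz
  -- disjointness
  have hdisj : ∀ σ τ : Fin k → Equiv.Perm (Fin (m+1)), σ ≠ τ → P σ ∩ P τ ⊆ N := by
    rintro σ τ hst z ⟨⟨-, h1⟩, ⟨-, h2⟩⟩
    by_contra hzN
    apply hst
    have hinj : ∀ i, Function.Injective (z i) := by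
      intro i a b hab
      by_contra hne
      exact hzN (Set.mem_iUnion.mpr ⟨i, Set.mem_iUnion.mpr ⟨(a, b),
        Set.mem_iUnion.mpr ⟨hne, hab⟩⟩⟩)
    funext i
    have heq := Tuple.unique_monotone (h1 i) (h2 i)
    exact Equiv.ext fun j => hinj i (congrFun heq j)
  -- equal volumes of the pieces
  have hPv : ∀ σ, volume (P σ) = volume (P 1) := by
    intro σ
    have hmpΦ : MeasurePreserving (fun (z : Fin k → Fin (m+1) → ℝ) (i : Fin k) =>
        (MeasurableEquiv.piCongrLeft (fun _ : Fin (m+1) => ℝ) (σ i)).symm (z i))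
        volume volume :=
      volume_preserving_pi (fun i =>
        (volume_measurePreserving_piCongrLeft (fun _ : Fin (m+1) => ℝ) (σ i)).symm)
    have hR : ∀ (i : Fin k) (x : Fin (m+1) → ℝ),
        (MeasurableEquiv.piCongrLeft (fun _ : Fin (m+1) => ℝ) (σ i)).symm x
          = fun j => x (σ i j) := by
      intro i x
      funext j
      exact Equiv.piCongrLeft_symm_apply (fun _ => ℝ) (σ i) x j
    have hpre : (fun (z : Fin k → Fin (m+1) → ℝ) (i : Fin k) =>
        (MeasurableEquiv.piCongrLeft (fun _ : Fin (m+1) => ℝ) (σ i)).symm (z i)) ⁻¹' (P 1)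
          = P σ := by
      ext z
      simp only [Set.mem_preimage, hPdef, Set.mem_setOf_eq, hR]
      constructor
      · rintro ⟨⟨hnn, hsum⟩, hmono⟩
        refine ⟨⟨fun i j => by simpa using hnn i ((σ i).symm j), ?_⟩,
          fun i => by simpa using hmono i⟩
        calc ∑ i, univ.sup' H (fun j => z i j)
            = ∑ i, univ.sup' H (fun j => z i (σ i j)) :=
              Finset.sum_congr rfl fun i _ => (sup'_comp_perm H (z i) (σ i)).symm
          _ ≤ t := hsum
      · rintro ⟨⟨hnn, hsum⟩, hmono⟩
        refine ⟨⟨fun i j => hnn i (σ i j), ?_⟩, fun i => by simpa using hmono i⟩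
        calc ∑ i, univ.sup' H (fun j => z i (σ i j))
            = ∑ i, univ.sup' H (fun j => z i j) :=
              Finset.sum_congr rfl fun i _ => sup'_comp_perm H (z i) (σ i)
          _ ≤ t := hsum
    rw [← hpre]
    exact hmpΦ.measure_preimage (hPm 1).nullMeasurableSet
  -- tile
  have htile := tile (univ : Finset (Fin k → Equiv.Perm (Fin (m+1)))) P hN
    (fun σ _ => (hPm σ).nullMeasurableSet) (fun σ _ τ _ h => hdisj σ τ h)
    (fun σ _ => hPv σ)
  rw [← hcover] at htile
  -- from P 1 to the curried simplex
  have hmpΨ : MeasurePreserving (fun (z : Fin k → Fin (m+1) → ℝ) (i : Fin k) =>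
      (psumEquiv (m+1)) (z i)) volume volume :=
    volume_preserving_pi (fun _ => psum_measurePreserving (m+1))
  have hpre2 : (fun (z : Fin k → Fin (m+1) → ℝ) (i : Fin k) =>
      (psumEquiv (m+1)) (z i)) ⁻¹' (P 1)
        = {z : Fin k → Fin (m+1) → ℝ | (∀ i j, 0 ≤ z i j) ∧ ∑ i, ∑ j, z i j ≤ t} := by
    ext z
    simp only [Set.mem_preimage, hPdef, Set.mem_setOf_eq, psumEquiv_apply]
    constructor
    · rintro ⟨⟨hnn, hsum⟩, hmono⟩
      have hmono' : ∀ i, Monotone (psum (m+1) (z i)) := fun i => by simpa using hmono i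
      have hz : ∀ i j, 0 ≤ z i j := fun i => nonneg_of_psum (hnn i 0) (hmono' i)
      refine ⟨hz, ?_⟩
      have hsup : ∀ i, univ.sup' H (fun j => psum (m+1) (z i) j) = ∑ j, z i j := by
        intro i
        rw [show (fun j => psum (m+1) (z i) j) = psum (m+1) (z i) from rfl,
          sup'_of_monotone H _ (hmono' i), psum_last]
      calc ∑ i, ∑ j, z i j = ∑ i, univ.sup' H (fun j => psum (m+1) (z i) j) :=
            Finset.sum_congr rfl fun i _ => (hsup i).symm
        _ ≤ t := hsum
    · rintro ⟨hnn, hsum⟩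
      have hmono' : ∀ i, Monotone (psum (m+1) (z i)) :=
        fun i => psum_monotone_of_nonneg (fun j => hnn i j)
      refine ⟨⟨fun i j => psum_nonneg (fun j' => hnn i j') j, ?_⟩,
        fun i => by simpa using hmono' i⟩
      have hsup : ∀ i, univ.sup' H (fun j => psum (m+1) (z i) j) = ∑ j, z i j := by
        intro i
        rw [show (fun j => psum (m+1) (z i) j) = psum (m+1) (z i) from rfl,
          sup'_of_monotone H _ (hmono' i), psum_last]
      rw [Finset.sum_congr rfl fun i _ => hsup i]
      exact hsum
  have hP1vol : volume (P 1)
      = volume {z : Fin k → Fin (m+1) → ℝ | (∀ i j, 0 ≤ z i j) ∧ ∑ i, ∑ j, z i j ≤ t} := by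
    rw [← hmpΨ.measure_preimage (hPm 1).nullMeasurableSet, hpre2]
  -- flatten to `Fin ((m+1)*k) → ℝ`
  obtain ⟨Fl, hFlm, hFlinv⟩ := flatten (m+1) k
  have hflatmeas : MeasurableSet
      {x : Fin ((m+1)*k) → ℝ | (∀ p, 0 ≤ x p) ∧ ∑ p, x p ≤ t} := by
    rw [Set.setOf_and]
    refine MeasurableSet.inter ?_ ?_
    · rw [Set.setOf_forall]
      exact MeasurableSet.iInter fun p =>
        measurableSet_le measurable_const (measurable_pi_apply p)
    · exact measurableSet_le (Finset.measurable_sum _ fun p _ => measurable_pi_apply p)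
        measurable_const
  have hpre3 : Fl ⁻¹' {x : Fin ((m+1)*k) → ℝ | (∀ p, 0 ≤ x p) ∧ ∑ p, x p ≤ t}
      = {z : Fin k → Fin (m+1) → ℝ | (∀ i j, 0 ≤ z i j) ∧ ∑ i, ∑ j, z i j ≤ t} := by
    ext z
    simp only [Set.mem_preimage, Set.mem_setOf_eq]
    rw [(hFlinv z).2]
    exact and_congr (hFlinv z).1 Iff.rfl
  have hflatvol : volume {z : Fin k → Fin (m+1) → ℝ |
        (∀ i j, 0 ≤ z i j) ∧ ∑ i, ∑ j, z i j ≤ t}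
      = volume {x : Fin ((m+1)*k) → ℝ | (∀ p, 0 ≤ x p) ∧ ∑ p, x p ≤ t} := by
    rw [← hpre3]
    exact hFlm.measure_preimage hflatmeas.nullMeasurableSet
  -- final computation
  have hcard : (((univ : Finset (Fin k → Equiv.Perm (Fin (m+1)))).card : ℕ) : ℝ≥0∞)
      = ((Nat.factorial (m+1) ^ k : ℕ) : ℝ≥0∞) := by
    rw [Finset.card_univ, Fintype.card_fun, Fintype.card_perm, Fintype.card_fin,
      Fintype.card_fin]
  rw [htile, hcard, hP1vol, hflatvol, volume_simplex ((m+1)*k) ht]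
  rw [← ENNReal.ofReal_natCast (Nat.factorial (m+1) ^ k),
    ← ENNReal.ofReal_mul (by positivity)]
  congr 1
  push_cast
  ring
end

section
/- For the multi-channel convex hull characterization: $\mathrm{Conv}(\mathcal{B}_0^t(\bar{x})) = \mathcal{D} \cap \widetilde{\mathcal{B}}_{1,\infty}^t(\bar{x})$, where the $\ell_0$-ball perturbs up to $t$ entries across all of their $d$ channels. -/
open scoped ENNReal

noncomputable def deltaE2 {k d : ℕ} (a b x : Fin k → Fin d → ℝ) (i : Fin k) (j : Fin d)
    (y : Fin k → Fin d → ℝ) : ℝ≥0∞ :=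
  if y i j = x i j then 0
  else if x i j < y i j then
    (if b i j = x i j then ⊤ else ENNReal.ofReal ((y i j - x i j) / (b i j - x i j)))
  else (if a i j = x i j then ⊤ else ENNReal.ofReal ((y i j - x i j) / (a i j - x i j)))


noncomputable def gaugeS (α β ξ u : ℝ) : ℝ :=
  if ξ < u then (u - ξ) / (β - ξ) else if u < ξ then (u - ξ) / (α - ξ) else 0

noncomputable def slope1 (β ξ : ℝ) : ℝ := if β = ξ then 0 else (β - ξ)⁻¹
noncomputable def slope2 (α ξ : ℝ) : ℝ := if α = ξ then 0 else (α - ξ)⁻¹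

lemma gaugeS_of_gt {α β ξ u : ℝ} (h : ξ < u) : gaugeS α β ξ u = (u - ξ) / (β - ξ) := by
  simp [gaugeS, h]

lemma gaugeS_of_lt {α β ξ u : ℝ} (h : u < ξ) : gaugeS α β ξ u = (u - ξ) / (α - ξ) := by
  simp [gaugeS, h, not_lt.2 h.le, asymm h]

lemma gaugeS_of_eq {α β ξ u : ℝ} (h : u = ξ) : gaugeS α β ξ u = 0 := by
  simp [gaugeS, h]

lemma gaugeS_nonneg {α β ξ u : ℝ} (hαu : α ≤ u) (huβ : u ≤ β) :
    0 ≤ gaugeS α β ξ u := by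
  rcases lt_trichotomy ξ u with h | h | h
  · rw [gaugeS_of_gt h]; apply div_nonneg <;> linarith
  · rw [gaugeS_of_eq h.symm]
  · rw [gaugeS_of_lt h]
    rw [div_nonneg_iff]; right; constructor <;> linarith

lemma gaugeS_le_one {α β ξ u : ℝ} (hαu : α ≤ u) (huβ : u ≤ β) :
    gaugeS α β ξ u ≤ 1 := by
  rcases lt_trichotomy ξ u with h | h | h
  · rw [gaugeS_of_gt h, div_le_one (by linarith)]; linarith
  · rw [gaugeS_of_eq h.symm]; norm_num
  · rw [gaugeS_of_lt h, div_le_one_iff]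
    right; right; constructor <;> linarith

lemma gaugeS_eq_zero {α β ξ u : ℝ} (hαu : α ≤ u) (huβ : u ≤ β)
    (h : gaugeS α β ξ u = 0) : u = ξ := by
  rcases lt_trichotomy ξ u with h1 | h1 | h1
  · rw [gaugeS_of_gt h1] at h
    have := div_pos (by linarith : (0:ℝ) < u - ξ) (by linarith : (0:ℝ) < β - ξ)
    linarith
  · exact h1.symm
  · rw [gaugeS_of_lt h1] at h
    have := div_pos_of_neg_of_neg (by linarith : u - ξ < 0) (by linarith : α - ξ < 0)
    linarith

lemma slope1_mul_le {α β ξ u : ℝ} (hαu : α ≤ u) (huβ : u ≤ β) (hαξ : α ≤ ξ) (hξβ : ξ ≤ β) :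
    slope1 β ξ * (u - ξ) ≤ gaugeS α β ξ u := by
  unfold slope1
  rcases lt_trichotomy ξ u with h | h | h
  · have hβ : ¬ β = ξ := by intro hh; rw [hh] at huβ; linarith
    rw [if_neg hβ, gaugeS_of_gt h, div_eq_inv_mul]
  · rw [gaugeS_of_eq h.symm, ← h]; simp
  · have hg := gaugeS_nonneg (ξ := ξ) hαu huβ
    have hle : slope1 β ξ * (u - ξ) ≤ 0 := by
      unfold slope1
      split_ifs with hb
      · simp
      · have hβ : 0 < β - ξ := lt_of_le_of_ne (by linarith) (fun hh => hb (by linarith))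
        exact mul_nonpos_of_nonneg_of_nonpos (by positivity) (by linarith)
    unfold slope1 at hle; linarith

lemma slope2_mul_le {α β ξ u : ℝ} (hαu : α ≤ u) (huβ : u ≤ β) (hαξ : α ≤ ξ) (hξβ : ξ ≤ β) :
    slope2 α ξ * (u - ξ) ≤ gaugeS α β ξ u := by
  unfold slope2
  rcases lt_trichotomy ξ u with h | h | h
  · have hg := gaugeS_nonneg (ξ := ξ) hαu huβ
    have hle : slope2 α ξ * (u - ξ) ≤ 0 := by
      unfold slope2
      split_ifs with hb
      · simp
      · have hα : α - ξ < 0 := lt_of_le_of_ne (by linarith) (fun hh => hb (by linarith))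
        exact mul_nonpos_of_nonpos_of_nonneg (by simpa using inv_nonpos.2 hα.le) (by linarith)
    unfold slope2 at hle; linarith
  · rw [gaugeS_of_eq h.symm, ← h]; simp
  · have hα : ¬ α = ξ := by intro hh; rw [hh] at hαu; linarith
    rw [if_neg hα, gaugeS_of_lt h, div_eq_inv_mul]

lemma gaugeS_cases {α β ξ u : ℝ} (hαu : α ≤ u) (huβ : u ≤ β) :
    gaugeS α β ξ u = slope1 β ξ * (u - ξ) ∨ gaugeS α β ξ u = slope2 α ξ * (u - ξ) := by
  rcases lt_trichotomy ξ u with h | h | h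
  · left
    have hβ : ¬ β = ξ := by intro hh; rw [hh] at huβ; linarith
    rw [slope1, if_neg hβ, gaugeS_of_gt h, div_eq_inv_mul]
  · left; rw [gaugeS_of_eq h.symm, ← h]; simp
  · right
    have hα : ¬ α = ξ := by intro hh; rw [hh] at hαu; linarith
    rw [slope2, if_neg hα, gaugeS_of_lt h, div_eq_inv_mul]

lemma gaugeS_vmem {α β ξ u s : ℝ} (hαu : α ≤ u) (huβ : u ≤ β) (hαξ : α ≤ ξ) (hξβ : ξ ≤ β)
    (hs : 0 < s) (h : gaugeS α β ξ u ≤ s) :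
    α ≤ ξ + (u - ξ) / s ∧ ξ + (u - ξ) / s ≤ β := by
  rcases lt_trichotomy ξ u with h1 | h1 | h1
  · rw [gaugeS_of_gt h1] at h
    have hβ : 0 < β - ξ := by linarith
    rw [div_le_iff₀ hβ] at h
    constructor
    · have : 0 ≤ (u - ξ) / s := div_nonneg (by linarith) hs.le
      linarith
    · have : (u - ξ) / s ≤ β - ξ := by rw [div_le_iff₀ hs]; nlinarith
      linarith
  · rw [← h1]; simp [hs.ne']; constructor <;> linarith
  · rw [gaugeS_of_lt h1] at h
    have hα : α - ξ < 0 := by linarith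
    rw [div_le_iff_of_neg hα] at h
    constructor
    · have : α - ξ ≤ (u - ξ) / s := by rw [le_div_iff₀ hs]; nlinarith
      linarith
    · have : (u - ξ) / s ≤ 0 := div_nonpos_of_nonpos_of_nonneg (by linarith) hs.le
      linarith


def GoodW (k t : ℕ) (s : Fin k → ℝ) : Prop :=
  ∃ w : Finset (Fin k) → ℝ, (∀ S, 0 ≤ w S) ∧ (∑ S : Finset (Fin k), w S) = 1 ∧
    (∀ S, w S ≠ 0 → S.card ≤ t) ∧
    (∀ i, ∑ S ∈ Finset.univ.filter (fun S => i ∈ S), w S = s i)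

lemma goodW_combine {k t : ℕ} {s s' s'' : Fin k → ℝ} {θ : ℝ} (h0 : 0 ≤ θ) (h1 : θ ≤ 1)
    (hs : ∀ i, s i = θ * s' i + (1 - θ) * s'' i)
    (H' : GoodW k t s') (H'' : GoodW k t s'') : GoodW k t s := by
  obtain ⟨w', n', sum', supp', marg'⟩ := H'
  obtain ⟨w'', n'', sum'', supp'', marg''⟩ := H''
  refine ⟨fun S => θ * w' S + (1 - θ) * w'' S, ?_, ?_, ?_, ?_⟩
  · intro S
    exact add_nonneg (mul_nonneg h0 (n' S)) (mul_nonneg (by linarith) (n'' S))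
  · rw [Finset.sum_add_distrib, ← Finset.mul_sum, ← Finset.mul_sum, sum', sum'']; ring
  · intro S hS
    rcases eq_or_ne (w' S) 0 with h | h
    · apply supp'' S
      intro h2; apply hS; simp only []; rw [h, h2]; ring
    · exact supp' S h
  · intro i
    rw [Finset.sum_add_distrib, ← Finset.mul_sum, ← Finset.mul_sum, marg' i, marg'' i, hs i]

lemma goodW_of_int {k t : ℕ} {s : Fin k → ℝ} (h01 : ∀ i, s i = 0 ∨ s i = 1)
    (hsum : ∑ i, s i ≤ (t : ℝ)) : GoodW k t s := by
  classical
  set S₀ := Finset.univ.filter (fun i => s i = 1) with hS₀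
  have hcard : (S₀.card : ℝ) = ∑ i, s i := by
    rw [← Finset.sum_filter_add_sum_filter_not Finset.univ (fun i => s i = 1) s]
    have e1 : ∑ i ∈ S₀, s i = ∑ i ∈ S₀, (1:ℝ) := by
      apply Finset.sum_congr rfl
      intro i hi; exact (Finset.mem_filter.1 hi).2
    have e2 : ∑ i ∈ Finset.univ.filter (fun i => ¬ s i = 1), s i = 0 := by
      apply Finset.sum_eq_zero
      intro i hi
      rcases h01 i with h | h
      · exact h
      · exact absurd h (Finset.mem_filter.1 hi).2
    rw [e1, e2]; simp
  refine ⟨fun S => if S = S₀ then 1 else 0, ?_, ?_, ?_, ?_⟩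
  · intro S; dsimp only; split <;> norm_num
  · simp
  · intro S hS
    have hSeq : S = S₀ := by by_contra h; simp only [if_neg h] at hS; exact hS rfl
    rw [hSeq]
    have : (S₀.card : ℝ) ≤ (t : ℝ) := by rw [hcard]; exact hsum
    exact_mod_cast this
  · intro i
    rw [Finset.sum_ite_eq' (Finset.univ.filter (fun S => i ∈ S)) S₀ (fun _ => (1:ℝ))]
    rcases h01 i with h | h
    · have : i ∉ S₀ := by simp [hS₀, h]
      simp [this, h]
    · have : i ∈ S₀ := by simp [hS₀, h]
      simp [this, h]

lemma sum_update_one {k : ℕ} (s : Fin k → ℝ) (i : Fin k) (c : ℝ) :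
    ∑ l, Function.update s i c l = ∑ l, s l - s i + c := by
  rw [Finset.sum_update_of_mem (Finset.mem_univ i),
    Finset.sum_sdiff_eq_sub (Finset.subset_univ {i})]
  simp; ring

lemma sum_update_two {k : ℕ} (s : Fin k → ℝ) {i j : Fin k} (hij : i ≠ j) (c1 c2 : ℝ) :
    ∑ l, Function.update (Function.update s i c1) j c2 l = ∑ l, s l - s i - s j + c1 + c2 := by
  rw [Finset.sum_update_of_mem (Finset.mem_univ j)]
  rw [Finset.sum_update_of_mem (by simp [hij] : i ∈ Finset.univ \ {j})]
  rw [Finset.sum_sdiff_eq_sub (by simp [hij] : {i} ⊆ Finset.univ \ {j}),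
    Finset.sum_sdiff_eq_sub (Finset.subset_univ {j})]
  simp; ring

lemma goodW_all {k t : ℕ} (s : Fin k → ℝ) (h0 : ∀ i, 0 ≤ s i) (h1 : ∀ i, s i ≤ 1)
    (hsum : ∑ i, s i ≤ (t : ℝ)) : GoodW k t s := by
  classical
  generalize hN : (Finset.univ.filter (fun i => s i ≠ 0 ∧ s i ≠ 1)).card = N
  induction N using Nat.strong_induction_on generalizing s with
  | _ N ih =>
  rcases Nat.eq_zero_or_pos N with hN0 | hNpos
  · subst hN0
    apply goodW_of_int _ hsum
    intro i
    by_contra hc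
    push_neg at hc
    have hmem : i ∈ Finset.univ.filter (fun i => s i ≠ 0 ∧ s i ≠ 1) :=
      Finset.mem_filter.2 ⟨Finset.mem_univ _, hc⟩
    have := Finset.card_pos.2 ⟨i, hmem⟩
    omega
  · have hne : (Finset.univ.filter (fun i => s i ≠ 0 ∧ s i ≠ 1)).Nonempty :=
      Finset.card_pos.1 (by omega)
    obtain ⟨i, hi⟩ := hne
    have hi' : s i ≠ 0 ∧ s i ≠ 1 := (Finset.mem_filter.1 hi).2
    have hsi0 : 0 < s i := lt_of_le_of_ne (h0 i) (Ne.symm hi'.1)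
    have hsi1 : s i < 1 := lt_of_le_of_ne (h1 i) hi'.2
    by_cases hj : ∃ j, j ≠ i ∧ j ∈ Finset.univ.filter (fun i => s i ≠ 0 ∧ s i ≠ 1)
    · -- two fractional coordinates
      obtain ⟨j, hji, hjmem⟩ := hj
      have hj' : s j ≠ 0 ∧ s j ≠ 1 := (Finset.mem_filter.1 hjmem).2
      have hsj0 : 0 < s j := lt_of_le_of_ne (h0 j) (Ne.symm hj'.1)
      have hsj1 : s j < 1 := lt_of_le_of_ne (h1 j) hj'.2
      set ε1 := min (s i) (1 - s j) with hε1def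
      set ε2 := min (1 - s i) (s j) with hε2def
      have hε1 : 0 < ε1 := lt_min hsi0 (by linarith)
      have hε2 : 0 < ε2 := lt_min (by linarith) hsj0
      have hε1a : ε1 ≤ s i := min_le_left _ _
      have hε1b : ε1 ≤ 1 - s j := min_le_right _ _
      have hε2a : ε2 ≤ 1 - s i := min_le_left _ _
      have hε2b : ε2 ≤ s j := min_le_right _ _
      have hij : i ≠ j := fun h => hji h.symm
      set s' := Function.update (Function.update s i (s i - ε1)) j (s j + ε1) with hs'def
      set s'' := Function.update (Function.update s i (s i + ε2)) j (s j - ε2) with hs''def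
      have hs'i : s' i = s i - ε1 := by simp [hs'def, Function.update_apply, hij]
      have hs'j : s' j = s j + ε1 := by simp [hs'def, Function.update_apply]
      have hs'l : ∀ l, l ≠ i → l ≠ j → s' l = s l := by
        intro l hli hlj; simp [hs'def, Function.update_apply, hli, hlj]
      have hs''i : s'' i = s i + ε2 := by simp [hs''def, Function.update_apply, hij]
      have hs''j : s'' j = s j - ε2 := by simp [hs''def, Function.update_apply]
      have hs''l : ∀ l, l ≠ i → l ≠ j → s'' l = s l := by
        intro l hli hlj; simp [hs''def, Function.update_apply, hli, hlj]
      -- bounds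
      have hb' : ∀ l, 0 ≤ s' l ∧ s' l ≤ 1 := by
        intro l
        rcases eq_or_ne l i with rfl | hli
        · rw [hs'i]; constructor <;> linarith
        · rcases eq_or_ne l j with rfl | hlj
          · rw [hs'j]; constructor <;> linarith
          · rw [hs'l l hli hlj]; exact ⟨h0 l, h1 l⟩
      have hb'' : ∀ l, 0 ≤ s'' l ∧ s'' l ≤ 1 := by
        intro l
        rcases eq_or_ne l i with rfl | hli
        · rw [hs''i]; constructor <;> linarith
        · rcases eq_or_ne l j with rfl | hlj
          · rw [hs''j]; constructor <;> linarith
          · rw [hs''l l hli hlj]; exact ⟨h0 l, h1 l⟩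
      -- sums
      have hsum' : ∑ l, s' l ≤ (t : ℝ) := by
        rw [hs'def, sum_update_two s hij]; linarith
      have hsum'' : ∑ l, s'' l ≤ (t : ℝ) := by
        rw [hs''def, sum_update_two s hij]; linarith
      -- fractional sets shrink
      have hsub' : Finset.univ.filter (fun l => s' l ≠ 0 ∧ s' l ≠ 1)
          ⊆ Finset.univ.filter (fun l => s l ≠ 0 ∧ s l ≠ 1) := by
        intro l hl
        rcases eq_or_ne l i with rfl | hli
        · exact hi
        · rcases eq_or_ne l j with rfl | hlj
          · exact hjmem
          · have := (Finset.mem_filter.1 hl).2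
            rw [hs'l l hli hlj] at this
            exact Finset.mem_filter.2 ⟨Finset.mem_univ _, this⟩
      have hsub'' : Finset.univ.filter (fun l => s'' l ≠ 0 ∧ s'' l ≠ 1)
          ⊆ Finset.univ.filter (fun l => s l ≠ 0 ∧ s l ≠ 1) := by
        intro l hl
        rcases eq_or_ne l i with rfl | hli
        · exact hi
        · rcases eq_or_ne l j with rfl | hlj
          · exact hjmem
          · have := (Finset.mem_filter.1 hl).2
            rw [hs''l l hli hlj] at this
            exact Finset.mem_filter.2 ⟨Finset.mem_univ _, this⟩
      have hlt' : (Finset.univ.filter (fun l => s' l ≠ 0 ∧ s' l ≠ 1)).card < N := by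
        rw [← hN]
        apply Finset.card_lt_card
        rw [Finset.ssubset_iff_of_subset hsub']
        rcases min_cases (s i) (1 - s j) with ⟨he, _⟩ | ⟨he, _⟩
        · exact ⟨i, hi, by simp [hs'i, hε1def, he]⟩
        · exact ⟨j, hjmem, by simp [hs'j, hε1def, he]⟩
      have hlt'' : (Finset.univ.filter (fun l => s'' l ≠ 0 ∧ s'' l ≠ 1)).card < N := by
        rw [← hN]
        apply Finset.card_lt_card
        rw [Finset.ssubset_iff_of_subset hsub'']
        rcases min_cases (1 - s i) (s j) with ⟨he, _⟩ | ⟨he, _⟩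
        · exact ⟨i, hi, by simp [hs''i, hε2def, he]⟩
        · exact ⟨j, hjmem, by simp [hs''j, hε2def, he]⟩
      have H' := ih _ hlt' s' (fun l => (hb' l).1) (fun l => (hb' l).2) hsum' rfl
      have H'' := ih _ hlt'' s'' (fun l => (hb'' l).1) (fun l => (hb'' l).2) hsum'' rfl
      have hεne : ε1 + ε2 ≠ 0 := by positivity
      apply goodW_combine (θ := ε2 / (ε1 + ε2))
        (div_nonneg hε2.le (by linarith)) (by rw [div_le_one (by linarith)]; linarith)
        _ H' H''
      intro l
      rcases eq_or_ne l i with rfl | hli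
      · rw [hs'i, hs''i]; field_simp; ring
      · rcases eq_or_ne l j with rfl | hlj
        · rw [hs'j, hs''j]; field_simp; ring
        · rw [hs'l l hli hlj, hs''l l hli hlj]; field_simp; ring
    · -- i is the only fractional coordinate
      push_neg at hj
      have hother : ∀ l, l ≠ i → s l = 0 ∨ s l = 1 := by
        intro l hl
        by_contra hc
        push_neg at hc
        exact (hj l hl) (Finset.mem_filter.2 ⟨Finset.mem_univ _, hc⟩)
      set s' := Function.update s i 0 with hs'def
      set s'' := Function.update s i 1 with hs''def
      have hs'i : s' i = 0 := by simp [hs'def]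
      have hs''i : s'' i = 1 := by simp [hs''def]
      have hs'l : ∀ l, l ≠ i → s' l = s l := by
        intro l hl; simp [hs'def, Function.update_apply, hl]
      have hs''l : ∀ l, l ≠ i → s'' l = s l := by
        intro l hl; simp [hs''def, Function.update_apply, hl]
      -- the integer sum bound
      set m := ((Finset.univ \ {i}).filter (fun l => s l = 1)).card with hmdef
      have hsplit : ∑ l ∈ Finset.univ \ {i}, s l = (m : ℝ) := by
        rw [hmdef]
        rw [← Finset.sum_boole]
        apply Finset.sum_congr rfl
        intro l hl
        have hl' : l ≠ i := by simpa using (Finset.mem_sdiff.1 hl).2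
        rcases hother l hl' with h | h <;> simp [h]
      have hsumsplit : ∑ l, s l = s i + (m : ℝ) := by
        rw [← hsplit, Finset.sum_sdiff_eq_sub (Finset.subset_univ {i})]
        simp
      have hmt : (m : ℝ) + 1 ≤ (t : ℝ) := by
        have h1 : (m : ℝ) < (t : ℝ) := by rw [hsumsplit] at hsum; linarith
        have h2 : m < t := by exact_mod_cast h1
        exact_mod_cast h2
      have hsum' : ∑ l, s' l ≤ (t : ℝ) := by
        rw [hs'def, sum_update_one]; linarith
      have hsum'' : ∑ l, s'' l ≤ (t : ℝ) := by
        rw [hs''def, sum_update_one]; rw [hsumsplit]; linarith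
      have hb' : ∀ l, 0 ≤ s' l ∧ s' l ≤ 1 := by
        intro l
        rcases eq_or_ne l i with rfl | hl
        · rw [hs'i]; norm_num
        · rw [hs'l l hl]; exact ⟨h0 l, h1 l⟩
      have hb'' : ∀ l, 0 ≤ s'' l ∧ s'' l ≤ 1 := by
        intro l
        rcases eq_or_ne l i with rfl | hl
        · rw [hs''i]; norm_num
        · rw [hs''l l hl]; exact ⟨h0 l, h1 l⟩
      have hsub' : Finset.univ.filter (fun l => s' l ≠ 0 ∧ s' l ≠ 1)
          ⊆ Finset.univ.filter (fun l => s l ≠ 0 ∧ s l ≠ 1) := by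
        intro l hl
        have hmem := (Finset.mem_filter.1 hl).2
        rcases eq_or_ne l i with rfl | hli
        · rw [hs'i] at hmem; exact absurd rfl hmem.1
        · rw [hs'l l hli] at hmem
          exact Finset.mem_filter.2 ⟨Finset.mem_univ _, hmem⟩
      have hsub'' : Finset.univ.filter (fun l => s'' l ≠ 0 ∧ s'' l ≠ 1)
          ⊆ Finset.univ.filter (fun l => s l ≠ 0 ∧ s l ≠ 1) := by
        intro l hl
        have hmem := (Finset.mem_filter.1 hl).2
        rcases eq_or_ne l i with rfl | hli
        · rw [hs''i] at hmem; exact absurd rfl hmem.2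
        · rw [hs''l l hli] at hmem
          exact Finset.mem_filter.2 ⟨Finset.mem_univ _, hmem⟩
      have hlt' : (Finset.univ.filter (fun l => s' l ≠ 0 ∧ s' l ≠ 1)).card < N := by
        rw [← hN]
        apply Finset.card_lt_card
        rw [Finset.ssubset_iff_of_subset hsub']
        exact ⟨i, hi, by simp [hs'i]⟩
      have hlt'' : (Finset.univ.filter (fun l => s'' l ≠ 0 ∧ s'' l ≠ 1)).card < N := by
        rw [← hN]
        apply Finset.card_lt_card
        rw [Finset.ssubset_iff_of_subset hsub'']
        exact ⟨i, hi, by simp [hs''i]⟩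
      have H' := ih _ hlt' s' (fun l => (hb' l).1) (fun l => (hb' l).2) hsum' rfl
      have H'' := ih _ hlt'' s'' (fun l => (hb'' l).1) (fun l => (hb'' l).2) hsum'' rfl
      apply goodW_combine (θ := 1 - s i) (by linarith) (by linarith) _ H' H''
      intro l
      rcases eq_or_ne l i with rfl | hli
      · rw [hs'i, hs''i]; ring
      · rw [hs'l l hli, hs''l l hli]; ring

lemma deltaE2_eq_ofReal_gaugeS {k d : ℕ} (a b x : Fin k → Fin d → ℝ) (i : Fin k) (j : Fin d)
    (y : Fin k → Fin d → ℝ) (hxa : a i j ≤ x i j) (hxb : x i j ≤ b i j)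
    (hya : a i j ≤ y i j) (hyb : y i j ≤ b i j) :
    deltaE2 a b x i j y = ENNReal.ofReal (gaugeS (a i j) (b i j) (x i j) (y i j)) := by
  rcases lt_trichotomy (x i j) (y i j) with h | h | h
  · have hb : ¬ b i j = x i j := by intro hh; rw [hh] at hyb; linarith
    rw [gaugeS_of_gt h]
    simp [deltaE2, (ne_of_gt h), hb, h]
  · rw [gaugeS_of_eq h.symm, deltaE2, if_pos h.symm]
    simp
  · have ha : ¬ a i j = x i j := by intro hh; rw [hh] at hya; linarith
    rw [gaugeS_of_lt h]
    simp [deltaE2, (ne_of_lt h), not_lt.2 h.le, ha]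

lemma sum_sup_delta_eq {k d : ℕ} (hdne : (Finset.univ : Finset (Fin d)).Nonempty)
    (a b x y : Fin k → Fin d → ℝ)
    (hx : ∀ i j, a i j ≤ x i j ∧ x i j ≤ b i j)
    (hy : ∀ i j, a i j ≤ y i j ∧ y i j ≤ b i j) :
    ∑ i, Finset.univ.sup (fun j => deltaE2 a b x i j y)
      = ENNReal.ofReal (∑ i, Finset.univ.sup' hdne
          (fun j => gaugeS (a i j) (b i j) (x i j) (y i j))) := by
  obtain ⟨j0, hj0⟩ := hdne
  rw [ENNReal.ofReal_sum_of_nonneg (fun i _ =>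
    le_trans (gaugeS_nonneg (hy i j0).1 (hy i j0).2)
      (Finset.le_sup' (f := fun j => gaugeS (a i j) (b i j) (x i j) (y i j)) hj0))]
  apply Finset.sum_congr rfl
  intro i _
  rw [← Finset.sup'_eq_sup ⟨j0, hj0⟩ (fun j => deltaE2 a b x i j y)]
  rw [Finset.comp_sup'_eq_sup'_comp ⟨j0, hj0⟩ ENNReal.ofReal
    (fun p q => Monotone.map_max (fun _ _ h => ENNReal.ofReal_le_ofReal h))]
  apply Finset.sup'_congr _ rfl
  intro j _
  exact deltaE2_eq_ofReal_gaugeS a b x i j y (hx i j).1 (hx i j).2 (hy i j).1 (hy i j).2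


lemma sum_sup_gauge_le {k d t : ℕ} (hdne : (Finset.univ : Finset (Fin d)).Nonempty)
    (a b x z : Fin k → Fin d → ℝ)
    (hz : ∀ i j, a i j ≤ z i j ∧ z i j ≤ b i j)
    (hcard : (Finset.univ.filter (fun i => z i ≠ x i)).card ≤ t) :
    ∑ i, Finset.univ.sup' hdne (fun j => gaugeS (a i j) (b i j) (x i j) (z i j)) ≤ (t : ℝ) := by
  classical
  have hterm : ∀ i : Fin k, Finset.univ.sup' hdne
      (fun j => gaugeS (a i j) (b i j) (x i j) (z i j)) ≤ (if z i = x i then (0:ℝ) else 1) := by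
    intro i
    apply Finset.sup'_le
    intro j _
    split_ifs with h
    · exact le_of_eq (gaugeS_of_eq (congrFun h j))
    · exact gaugeS_le_one (hz i j).1 (hz i j).2
  calc ∑ i, Finset.univ.sup' hdne (fun j => gaugeS (a i j) (b i j) (x i j) (z i j))
      ≤ ∑ i, (if z i = x i then (0:ℝ) else 1) := Finset.sum_le_sum (fun i _ => hterm i)
    _ = ((Finset.univ.filter (fun i => z i ≠ x i)).card : ℝ) := by
        rw [← Finset.sum_boole]
        apply Finset.sum_congr rfl
        intro i _
        by_cases h : z i = x i <;> simp [h]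
    _ ≤ (t : ℝ) := by exact_mod_cast hcard

/-- Multi-channel convex hull characterization:
`Conv(B₀ᵗ(x)) = D ∩ B̃_{1,∞}ᵗ(x)`. -/
theorem convexHull_multiChannel_l0Ball {k d : ℕ} (hk : 1 ≤ k) (hd : 1 ≤ d)
    (t : ℕ) (ht : 1 ≤ t) (htk : t ≤ k)
    (a b x : Fin k → Fin d → ℝ) (hab : ∀ i j, a i j ≤ b i j)
    (hx : ∀ i j, a i j ≤ x i j ∧ x i j ≤ b i j) :
    convexHull ℝ
        {y : Fin k → Fin d → ℝ | (∀ i j, y i j ∈ Set.Icc (a i j) (b i j)) ∧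
          (Finset.univ.filter (fun i => y i ≠ x i)).card ≤ t} =
      {y : Fin k → Fin d → ℝ | ∀ i j, y i j ∈ Set.Icc (a i j) (b i j)} ∩
        {y : Fin k → Fin d → ℝ |
          ∑ i, Finset.univ.sup (fun j => deltaE2 a b x i j y) ≤ (t : ℝ≥0∞)} := by
  classical
  have hdne : (Finset.univ : Finset (Fin d)).Nonempty := ⟨⟨0, hd⟩, Finset.mem_univ _⟩
  apply Set.eq_of_subset_of_subset
  · -- convex hull ⊆ intersection
    rw [convexHull_eq]
    rintro y ⟨ι, T, w, z, hw0, hw1, hz, hcm⟩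
    have hyeq : ∀ i j, y i j = ∑ p ∈ T, w p * z p i j := by
      intro i j
      rw [← hcm, Finset.centerMass_eq_of_sum_1 _ _ hw1]
      simp [Finset.sum_apply]
    have hzD : ∀ p ∈ T, ∀ i j, a i j ≤ z p i j ∧ z p i j ≤ b i j := by
      intro p hp i j
      exact (hz p hp).1 i j
    have hyD : ∀ i j, a i j ≤ y i j ∧ y i j ≤ b i j := by
      intro i j
      constructor
      · calc a i j = ∑ p ∈ T, w p * a i j := by rw [← Finset.sum_mul, hw1, one_mul]
          _ ≤ ∑ p ∈ T, w p * z p i j := Finset.sum_le_sum (fun p hp =>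
              mul_le_mul_of_nonneg_left (hzD p hp i j).1 (hw0 p hp))
          _ = y i j := (hyeq i j).symm
      · calc y i j = ∑ p ∈ T, w p * z p i j := hyeq i j
          _ ≤ ∑ p ∈ T, w p * b i j := Finset.sum_le_sum (fun p hp =>
              mul_le_mul_of_nonneg_left (hzD p hp i j).2 (hw0 p hp))
          _ = b i j := by rw [← Finset.sum_mul, hw1, one_mul]
    refine ⟨fun i j => Set.mem_Icc.2 (hyD i j), ?_⟩
    have hdiff : ∀ i j, y i j - x i j = ∑ p ∈ T, w p * (z p i j - x i j) := by
      intro i j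
      simp only [mul_sub]
      rw [Finset.sum_sub_distrib, ← Finset.sum_mul, hw1, one_mul, ← hyeq i j]
    have hkey : ∀ i j, gaugeS (a i j) (b i j) (x i j) (y i j)
        ≤ ∑ p ∈ T, w p * Finset.univ.sup' hdne
            (fun j' => gaugeS (a i j') (b i j') (x i j') (z p i j')) := by
      intro i j
      rcases gaugeS_cases (hyD i j).1 (hyD i j).2 with hc | hc
      · rw [hc, hdiff i j, Finset.mul_sum]
        apply Finset.sum_le_sum
        intro p hp
        rw [mul_left_comm]
        refine mul_le_mul_of_nonneg_left (le_trans
          (slope1_mul_le (hzD p hp i j).1 (hzD p hp i j).2 (hx i j).1 (hx i j).2)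
          (Finset.le_sup' (f := fun j' => gaugeS (a i j') (b i j') (x i j') (z p i j'))
            (Finset.mem_univ j))) (hw0 p hp)
      · rw [hc, hdiff i j, Finset.mul_sum]
        apply Finset.sum_le_sum
        intro p hp
        rw [mul_left_comm]
        refine mul_le_mul_of_nonneg_left (le_trans
          (slope2_mul_le (hzD p hp i j).1 (hzD p hp i j).2 (hx i j).1 (hx i j).2)
          (Finset.le_sup' (f := fun j' => gaugeS (a i j') (b i j') (x i j') (z p i j'))
            (Finset.mem_univ j))) (hw0 p hp)
    have hyb : ∑ i, Finset.univ.sup' hdne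
        (fun j => gaugeS (a i j) (b i j) (x i j) (y i j)) ≤ (t : ℝ) := by
      calc ∑ i, Finset.univ.sup' hdne (fun j => gaugeS (a i j) (b i j) (x i j) (y i j))
          ≤ ∑ i, ∑ p ∈ T, w p * Finset.univ.sup' hdne
              (fun j' => gaugeS (a i j') (b i j') (x i j') (z p i j')) :=
            Finset.sum_le_sum (fun i _ => Finset.sup'_le hdne _ (fun j _ => hkey i j))
        _ = ∑ p ∈ T, w p * ∑ i, Finset.univ.sup' hdne
              (fun j' => gaugeS (a i j') (b i j') (x i j') (z p i j')) := by
            rw [Finset.sum_comm]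
            exact Finset.sum_congr rfl (fun p _ => (Finset.mul_sum _ _ _).symm)
        _ ≤ ∑ p ∈ T, w p * (t : ℝ) := Finset.sum_le_sum (fun p hp =>
            mul_le_mul_of_nonneg_left
              (sum_sup_gauge_le hdne a b x (z p) (hzD p hp) (hz p hp).2) (hw0 p hp))
        _ = (t : ℝ) := by rw [← Finset.sum_mul, hw1, one_mul]
    show ∑ i, Finset.univ.sup (fun j => deltaE2 a b x i j y) ≤ (t : ℝ≥0∞)
    rw [sum_sup_delta_eq hdne a b x y hx hyD]
    calc ENNReal.ofReal (∑ i, Finset.univ.sup' hdne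
            (fun j => gaugeS (a i j) (b i j) (x i j) (y i j)))
        ≤ ENNReal.ofReal (t : ℝ) := ENNReal.ofReal_le_ofReal hyb
      _ = (t : ℝ≥0∞) := ENNReal.ofReal_natCast t
  · -- intersection ⊆ convex hull
    rintro y ⟨hyD', hyB⟩
    have hyD : ∀ i j, a i j ≤ y i j ∧ y i j ≤ b i j := fun i j => Set.mem_Icc.1 (hyD' i j)
    set sf : Fin k → ℝ := fun i => Finset.univ.sup' hdne
      (fun j => gaugeS (a i j) (b i j) (x i j) (y i j)) with hsfdef
    obtain ⟨j0, hj0⟩ := hdne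
    have h0s : ∀ i, 0 ≤ sf i := fun i =>
      le_trans (gaugeS_nonneg (hyD i j0).1 (hyD i j0).2)
        (Finset.le_sup' (f := fun j => gaugeS (a i j) (b i j) (x i j) (y i j)) hj0)
    have h1s : ∀ i, sf i ≤ 1 := fun i =>
      Finset.sup'_le _ _ (fun j _ => gaugeS_le_one (hyD i j).1 (hyD i j).2)
    have hgle : ∀ i j, gaugeS (a i j) (b i j) (x i j) (y i j) ≤ sf i := fun i j =>
      Finset.le_sup' (f := fun j => gaugeS (a i j) (b i j) (x i j) (y i j)) (Finset.mem_univ j)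
    have hsum : ∑ i, sf i ≤ (t : ℝ) := by
      have hB : ∑ i, Finset.univ.sup (fun j => deltaE2 a b x i j y) ≤ (t : ℝ≥0∞) := hyB
      rw [sum_sup_delta_eq ⟨j0, hj0⟩ a b x y hx hyD, ← ENNReal.ofReal_natCast t,
        ENNReal.ofReal_le_ofReal_iff (Nat.cast_nonneg t)] at hB
      exact hB
    obtain ⟨w, hw0, hw1, hwsupp, hwmarg⟩ := goodW_all sf h0s h1s hsum
    set v : Fin k → Fin d → ℝ := fun i j =>
      if sf i = 0 then x i j else x i j + (y i j - x i j) / sf i with hvdef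
    have hyeqx : ∀ i, sf i = 0 → ∀ j, y i j = x i j := by
      intro i h j
      apply gaugeS_eq_zero (hyD i j).1 (hyD i j).2
      have h1 := hgle i j
      have h2 := gaugeS_nonneg (ξ := x i j) (hyD i j).1 (hyD i j).2
      rw [h] at h1
      linarith
    have hvD : ∀ i j, a i j ≤ v i j ∧ v i j ≤ b i j := by
      intro i j
      by_cases h : sf i = 0
      · simp only [hvdef, if_pos h]
        exact hx i j
      · have hpos : 0 < sf i := lt_of_le_of_ne (h0s i) (Ne.symm h)
        simp only [hvdef, if_neg h]
        exact gaugeS_vmem (hyD i j).1 (hyD i j).2 (hx i j).1 (hx i j).2 hpos (hgle i j)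
    have hrecon : ∀ i j, x i j + sf i * (v i j - x i j) = y i j := by
      intro i j
      by_cases h : sf i = 0
      · simp only [hvdef, if_pos h, h]
        rw [hyeqx i h j]; ring
      · simp only [hvdef, if_neg h]
        field_simp
        ring
    set T : Finset (Finset (Fin k)) := Finset.univ.filter (fun S => w S ≠ 0) with hTdef
    have hsumT : ∑ S ∈ T, w S = 1 := by
      rw [hTdef, Finset.sum_filter_ne_zero, hw1]
    have hzmem : ∀ S ∈ T, (fun i j => if i ∈ S then v i j else x i j) ∈
        {y : Fin k → Fin d → ℝ | (∀ i j, y i j ∈ Set.Icc (a i j) (b i j)) ∧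
          (Finset.univ.filter (fun i => y i ≠ x i)).card ≤ t} := by
      intro S hS
      constructor
      · intro i j
        by_cases h : i ∈ S <;> simp only [if_pos, if_neg, h, if_true, if_false] <;>
          exact Set.mem_Icc.2 (by first | exact hvD i j | exact hx i j)
      · have hsub : Finset.univ.filter
            (fun i => (fun j => if i ∈ S then v i j else x i j) ≠ x i) ⊆ S := by
          intro i hi
          have := (Finset.mem_filter.1 hi).2
          by_contra h
          apply this
          funext j
          simp [h]
        exact le_trans (Finset.card_le_card hsub) (hwsupp S (Finset.mem_filter.1 hS).2)
    have heq : ∑ S ∈ T, w S • (fun i j => if i ∈ S then v i j else x i j) = y := by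
      funext i j
      have happ : (∑ S ∈ T, w S • (fun i j => if i ∈ S then v i j else x i j) :
          Fin k → Fin d → ℝ) i j = ∑ S ∈ T, w S * (if i ∈ S then v i j else x i j) := by
        simp [Finset.sum_apply]
      rw [happ]
      have hext : ∑ S ∈ T, w S * (if i ∈ S then v i j else x i j)
          = ∑ S : Finset (Fin k), w S * (if i ∈ S then v i j else x i j) := by
        rw [hTdef]
        apply Finset.sum_filter_of_ne
        intro S _ h hw
        apply h
        rw [hw, zero_mul]
      rw [hext, ← Finset.sum_filter_add_sum_filter_not Finset.univ (fun S => i ∈ S)]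
      have e1 : ∑ S ∈ Finset.univ.filter (fun S => i ∈ S),
          w S * (if i ∈ S then v i j else x i j) = sf i * v i j := by
        rw [← hwmarg i, Finset.sum_mul]
        apply Finset.sum_congr rfl
        intro S hS
        rw [if_pos (Finset.mem_filter.1 hS).2]
      have e2 : ∑ S ∈ Finset.univ.filter (fun S => ¬ i ∈ S),
          w S * (if i ∈ S then v i j else x i j) = (1 - sf i) * x i j := by
        have hnot : ∑ S ∈ Finset.univ.filter (fun S => ¬ i ∈ S), w S = 1 - sf i := by
          have := Finset.sum_filter_add_sum_filter_not Finset.univ (fun S => i ∈ S) w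
          rw [hwmarg i, hw1] at this
          linarith
        rw [← hnot, Finset.sum_mul]
        apply Finset.sum_congr rfl
        intro S hS
        rw [if_neg (Finset.mem_filter.1 hS).2]
      rw [e1, e2]
      have := hrecon i j
      linarith [hrecon i j]
    rw [← heq]
    exact (convex_convexHull ℝ _).sum_mem
      (fun S hS => hw0 S) hsumT
      (fun S hS => subset_convexHull ℝ _ (hzmem S hS))
end
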